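/- arXiv:2202.12545 — 8 statements merged into one kernel-verified Lean document; each statement's English description precedes it below -/
import Mathlib

section
/- Let T > 0 and let y : [0,T] → ℝ satisfy y(t) = y(0) + ∫₀ᵗ G(s) ds for all t ∈ [0,T], where G : [0,T] → ℝ is Lebesgue integrable. Define z(t) := sup_{s ∈ [0,t]} y(s). Then z(T) = sup_{t ∈ [0,T]} y(t), and there exists a measurable function v : [0,T] → {0,1} such that z(t) = y(0) + ∫₀ᵗ max(G(s),0)·(1 − v(s)) ds for all t ∈ [0,T]. -/
open MeasureTheory Set Filter Topology

namespace Stmt0Aux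

/-- The set of running-maximum points of `y` on `[0,T]`. -/
def mset (T : ℝ) (y : ℝ → ℝ) : Set ℝ := {s | s ∈ Icc 0 T ∧ ∀ u ∈ Icc 0 s, y u ≤ y s}

variable {T : ℝ} {G y : ℝ → ℝ}

lemma mset_subset : mset T y ⊆ Icc 0 T := fun _ h => h.1

lemma zero_mem_mset (hT : 0 ≤ T) : (0 : ℝ) ∈ mset T y := by
  refine ⟨⟨le_refl 0, hT⟩, fun u hu => ?_⟩
  have : u = 0 := le_antisymm hu.2 hu.1
  simp [this]

lemma mset_closed (hycont : ContinuousOn y (Icc 0 T)) : IsClosed (mset T y) := by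
  have : IsSeqClosed (mset T y) := by
    intro x p hx hxp
    have hpmem : p ∈ Icc 0 T :=
      isClosed_Icc.isSeqClosed (fun n => (hx n).1) hxp
    refine ⟨hpmem, fun u hu => ?_⟩
    rcases eq_or_lt_of_le hu.2 with h | h
    · simp [h]
    · have hev : ∀ᶠ n in atTop, y u ≤ y (x n) := by
        have : ∀ᶠ n in atTop, u < x n := hxp.eventually (eventually_gt_nhds h)
        filter_upwards [this] with n hn
        exact (hx n).2 u ⟨hu.1, hn.le⟩
      have htd : Tendsto (fun n => y (x n)) atTop (𝓝 (y p)) := by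
        have h1 : Tendsto x atTop (𝓝[Icc 0 T] p) :=
          tendsto_nhdsWithin_of_tendsto_nhds_of_eventually_within x hxp
            (Eventually.of_forall fun n => (hx n).1)
        exact ((hycont p hpmem).tendsto).comp h1
      exact ge_of_tendsto htd hev
  exact this.isClosed

lemma exists_max (hycont : ContinuousOn y (Icc 0 T)) {t : ℝ} (ht : t ∈ Icc 0 T) :
    ∃ w ∈ mset T y ∩ Icc 0 t, IsGreatest (y '' Icc 0 t) (y w) := by
  obtain ⟨w, hw, hwmax⟩ := isCompact_Icc.exists_isMaxOn (nonempty_Icc.2 ht.1)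
    (hycont.mono (Icc_subset_Icc_right ht.2))
  refine ⟨w, ⟨⟨⟨hw.1, hw.2.trans ht.2⟩, fun u hu => hwmax ⟨hu.1, hu.2.trans hw.2⟩⟩, hw⟩,
    mem_image_of_mem y hw, ?_⟩
  rintro v ⟨u, hu, rfl⟩
  exact hwmax hu

lemma const_on_gap (hycont : ContinuousOn y (Icc 0 T)) {c d : ℝ}
    (hc : c ∈ mset T y) (hd : d ∈ mset T y) (hcd : c ≤ d)
    (hgap : Ioo c d ∩ mset T y = ∅) : y d = y c := by
  refine le_antisymm ?_ (hd.2 c ⟨hc.1.1, hcd⟩)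
  rcases eq_or_lt_of_le hcd with h | h
  · simp [h]
  · have hioo : ∀ u ∈ Ioo c d, y u ≤ y c := by
      intro u hu
      have hut : u ∈ Icc 0 T := ⟨hc.1.1.trans hu.1.le, hu.2.le.trans hd.1.2⟩
      obtain ⟨w, ⟨hwm, hw⟩, hwg⟩ := exists_max hycont hut
      have hwc : w ≤ c := by
        by_contra hwc
        push_neg at hwc
        have : w ∈ Ioo c d ∩ mset T y := ⟨⟨hwc, lt_of_le_of_lt hw.2 hu.2⟩, hwm⟩
        simp [hgap] at this
      calc y u ≤ y w := hwg.2 (mem_image_of_mem y ⟨hut.1, le_refl u⟩)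
        _ ≤ y c := hc.2 w ⟨hw.1, hwc⟩
    have hsub : Ioo c d ⊆ Icc 0 T := fun u hu => ⟨hc.1.1.trans hu.1.le, hu.2.le.trans hd.1.2⟩
    have htd : Tendsto y (𝓝[Ioo c d] d) (𝓝 (y d)) :=
      (hycont d hd.1).tendsto.mono_left (nhdsWithin_mono d hsub)
    haveI := right_nhdsWithin_Ioo_neBot h
    exact le_of_tendsto htd (eventually_mem_nhdsWithin.mono hioo)

open intervalIntegral in
lemma ydiff (hG : IntegrableOn G (Icc 0 T))
    (hy : ∀ t ∈ Icc 0 T, y t = y 0 + ∫ s in (0:ℝ)..t, G s)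
    {s u : ℝ} (hs : s ∈ Icc 0 T) (hu : u ∈ Icc 0 T) (hsu : s ≤ u) :
    y u - y s = ∫ x in Ioc s u, G x := by
  have hint : ∀ v : ℝ, v ∈ Icc 0 T → IntervalIntegrable G volume 0 v := by
    intro v hv
    have : IntegrableOn G (uIcc 0 v) := by
      rw [uIcc_of_le hv.1]
      exact hG.mono_set (Icc_subset_Icc_right hv.2)
    exact this.intervalIntegrable
  rw [hy u hu, hy s hs, add_sub_add_left_eq_sub,
    integral_interval_sub_left (hint u hu) (hint s hs), integral_of_le hsu]

lemma integral_gap_zero (hT : 0 ≤ T) (hG : IntegrableOn G (Icc 0 T))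
    (hycont : ContinuousOn y (Icc 0 T))
    (hy : ∀ t ∈ Icc 0 T, y t = y 0 + ∫ s in (0:ℝ)..t, G s)
    {a : ℝ} (ha : a ∈ mset T y) :
    ∫ s in Ioo 0 a \ mset T y, G s = 0 := by
  set A := mset T y with hA
  set U := Ioo 0 a \ A with hU
  set cc : ℝ → ℝ := fun x => sSup (A ∩ Iic x) with hcc
  set dd : ℝ → ℝ := fun x => sInf (A ∩ Ici x) with hdd
  have hAcl : IsClosed A := mset_closed hycont
  have hUsub : U ⊆ Icc 0 T := fun x hx => ⟨hx.1.1.le, (hx.1.2.le).trans ha.1.2⟩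
  have hbddA : ∀ x : ℝ, BddAbove (A ∩ Iic x) := fun x => ⟨x, fun u hu => hu.2⟩
  have hbddB : ∀ x : ℝ, BddBelow (A ∩ Ici x) := fun x => ⟨x, fun u hu => hu.2⟩
  have hccP : ∀ x ∈ U, cc x ∈ A ∧ 0 ≤ cc x ∧ cc x < x := by
    intro x hx
    have hne : (A ∩ Iic x).Nonempty := ⟨0, zero_mem_mset hT, (hx.1.1).le⟩
    have hmem : cc x ∈ A ∩ Iic x := (hAcl.inter isClosed_Iic).csSup_mem hne (hbddA x)
    refine ⟨hmem.1, hmem.1.1.1, lt_of_le_of_ne hmem.2 ?_⟩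
    intro h; exact hx.2 (h ▸ hmem.1)
  have hddP : ∀ x ∈ U, dd x ∈ A ∧ x < dd x ∧ dd x ≤ a := by
    intro x hx
    have hne : (A ∩ Ici x).Nonempty := ⟨a, ha, (hx.1.2).le⟩
    have hmem : dd x ∈ A ∩ Ici x := (hAcl.inter isClosed_Ici).csInf_mem hne (hbddB x)
    refine ⟨hmem.1, lt_of_le_of_ne ?_ ?_, csInf_le (hbddB x) ⟨ha, hx.1.2.le⟩⟩
    · exact hmem.2
    · intro h; exact hx.2 (h ▸ hmem.1)
  have hgapP : ∀ x ∈ U, Ioo (cc x) (dd x) ∩ A = ∅ := by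
    intro x hx
    rw [eq_empty_iff_forall_notMem]
    rintro w ⟨hw1, hw2⟩
    rcases le_total w x with h | h
    · have : w ≤ cc x := le_csSup (hbddA x) ⟨hw2, h⟩
      exact absurd this (not_le.2 hw1.1)
    · have : dd x ≤ w := csInf_le (hbddB x) ⟨hw2, h⟩
      exact absurd this (not_le.2 hw1.2)
  have hIooU : ∀ x ∈ U, Ioo (cc x) (dd x) ⊆ U := by
    intro x hx w hw
    refine ⟨⟨lt_of_le_of_lt (hccP x hx).2.1 hw.1, lt_of_lt_of_le hw.2 (hddP x hx).2.2⟩, ?_⟩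
    intro hwA
    have : w ∈ Ioo (cc x) (dd x) ∩ A := ⟨hw, hwA⟩
    rw [hgapP x hx] at this
    exact this
  have hcdeq : ∀ x ∈ U, ∀ w ∈ Ioo (cc x) (dd x), cc w = cc x ∧ dd w = dd x := by
    intro x hx w hw
    constructor
    · have hset : A ∩ Iic w = A ∩ Iic (cc x) := by
        ext u
        constructor
        · rintro ⟨hu1, hu2⟩
          refine ⟨hu1, ?_⟩
          by_contra hcu
          rw [mem_Iic, not_le] at hcu
          have : u ∈ Ioo (cc x) (dd x) ∩ A :=
            ⟨⟨hcu, lt_of_le_of_lt hu2 hw.2⟩, hu1⟩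
          rw [hgapP x hx] at this; exact this
        · rintro ⟨hu1, hu2⟩
          exact ⟨hu1, le_trans hu2 hw.1.le⟩
      show sSup (A ∩ Iic w) = cc x
      rw [hset]
      exact IsGreatest.csSup_eq ⟨⟨(hccP x hx).1, mem_Iic.2 (le_refl _)⟩, fun u hu => hu.2⟩
    · have hset : A ∩ Ici w = A ∩ Ici (dd x) := by
        ext u
        constructor
        · rintro ⟨hu1, hu2⟩
          refine ⟨hu1, ?_⟩
          by_contra hcu
          rw [mem_Ici, not_le] at hcu
          have : u ∈ Ioo (cc x) (dd x) ∩ A :=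
            ⟨⟨lt_of_lt_of_le hw.1 hu2, hcu⟩, hu1⟩
          rw [hgapP x hx] at this; exact this
        · rintro ⟨hu1, hu2⟩
          exact ⟨hu1, le_trans hw.2.le hu2⟩
      show sInf (A ∩ Ici w) = dd x
      rw [hset]
      exact IsLeast.csInf_eq ⟨⟨(hddP x hx).1, mem_Ici.2 (le_refl _)⟩, fun u hu => hu.2⟩
  set S : Set (ℝ × ℝ) := (fun q : ℚ => ((cc q, dd q) : ℝ × ℝ)) '' {q : ℚ | (q : ℝ) ∈ U} with hS
  have hScnt : S.Countable := (Set.to_countable _).image _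
  haveI : Countable ↥S := hScnt.to_subtype
  have hwIoo : ∀ x ∈ U, x ∈ Ioo (cc x) (dd x) := fun x hx =>
    ⟨(hccP x hx).2.2, (hddP x hx).2.1⟩
  have hUeq : U = ⋃ (p : ↥S), Ioo (p : ℝ × ℝ).1 (p : ℝ × ℝ).2 := by
    ext w
    constructor
    · intro hw
      obtain ⟨q, hq1, hq2⟩ := exists_rat_btwn (hccP w hw).2.2
      have hqIoo : (q : ℝ) ∈ Ioo (cc w) (dd w) := ⟨hq1, hq2.trans (hddP w hw).2.1⟩
      have hqU : (q : ℝ) ∈ U := hIooU w hw hqIoo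
      have heq := hcdeq w hw q hqIoo
      refine mem_iUnion.2 ⟨⟨(cc q, dd q), ⟨q, hqU, rfl⟩⟩, ?_⟩
      show w ∈ Ioo (cc (q : ℝ)) (dd (q : ℝ))
      rw [heq.1, heq.2]
      exact hwIoo w hw
    · intro hw
      obtain ⟨p, hp⟩ := mem_iUnion.1 hw
      obtain ⟨pv, q, hqU, rfl⟩ := p
      exact hIooU _ hqU hp
  have hdisj : Pairwise (Function.onFun Disjoint
      (fun p : ↥S => Ioo (p : ℝ × ℝ).1 (p : ℝ × ℝ).2)) := by
    rintro ⟨pv, q, hqU, rfl⟩ ⟨pv', q', hq'U, rfl⟩ hne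
    rw [Function.onFun, Set.disjoint_iff_inter_eq_empty, eq_empty_iff_forall_notMem]
    rintro w ⟨hw1, hw2⟩
    have h1 := hcdeq _ hqU w hw1
    have h2 := hcdeq _ hq'U w hw2
    apply hne
    apply Subtype.ext
    show ((cc q, dd q) : ℝ × ℝ) = (cc q', dd q')
    rw [← h1.1, ← h1.2, ← h2.1, ← h2.2]
  have hint : IntegrableOn G U := hG.mono_set hUsub
  have hzero : ∀ p : ↥S, ∫ s in Ioo (p : ℝ × ℝ).1 (p : ℝ × ℝ).2, G s = 0 := by
    rintro ⟨pv, q, hqU, rfl⟩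
    show (∫ s in Ioo (cc (q:ℝ)) (dd (q:ℝ)), G s) = 0
    have hcA := (hccP _ hqU).1
    have hdA := (hddP _ hqU).1
    have hle : cc (q : ℝ) ≤ dd (q : ℝ) := ((hccP _ hqU).2.2.trans (hddP _ hqU).2.1).le
    rw [← integral_Ioc_eq_integral_Ioo,
      ← ydiff hG hy hcA.1 hdA.1 hle,
      const_on_gap hycont hcA hdA hle (hgapP _ hqU), sub_self]
  rw [hUeq, integral_iUnion (fun p => measurableSet_Ioo) hdisj
    (hUeq ▸ hint)]
  simp [hzero]

lemma ae_nonneg (hG : IntegrableOn G (Icc 0 T))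
    (hycont : ContinuousOn y (Icc 0 T))
    (hy : ∀ t ∈ Icc 0 T, y t = y 0 + ∫ s in (0:ℝ)..t, G s) :
    ∀ᵐ s ∂(volume.restrict (mset T y)), 0 ≤ G s := by
  set A := mset T y with hA
  have hAcl : IsClosed A := mset_closed hycont
  set G' : ℝ → ℝ := (Icc 0 T).indicator G with hG'def
  have hG'i : Integrable G' := (integrable_indicator_iff measurableSet_Icc).2 hG
  have hleb := IsUnifLocDoublingMeasure.ae_tendsto_average_norm_sub
    (μ := (volume : Measure ℝ)) hG'i.locallyIntegrable 1
  set R : Set ℝ := ⋃ q : ℚ, {s | s ∈ A ∧ s < (q:ℝ) ∧ A ∩ Ioo s (q:ℝ) = ∅} with hR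
  have hRcnt : R.Countable := by
    refine countable_iUnion fun q => Set.Subsingleton.countable ?_
    rintro s ⟨hsA, hsq, hs0⟩ s' ⟨hs'A, hs'q, hs'0⟩
    by_contra hne
    rcases lt_or_gt_of_ne hne with h | h
    · have : s' ∈ A ∩ Ioo s (q:ℝ) := ⟨hs'A, h, hs'q⟩
      rw [hs0] at this; exact this
    · have : s ∈ A ∩ Ioo s' (q:ℝ) := ⟨hsA, h, hsq⟩
      rw [hs'0] at this; exact this
  have hRae : ∀ᵐ s ∂(volume.restrict A), s ∉ R := by
    have h0 : volume.restrict A R = 0 :=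
      le_antisymm ((Measure.restrict_apply_le _ _).trans
        (hRcnt.measure_zero (volume : Measure ℝ)).le) zero_le
    exact measure_eq_zero_iff_ae_notMem.1 h0
  have hmem : ∀ᵐ s ∂(volume.restrict A), s ∈ A := ae_restrict_mem hAcl.measurableSet
  have hleb' := ae_restrict_of_ae (μ := volume) (s := A) hleb
  filter_upwards [hleb', hRae, hmem] with s hls hsR hsA
  have hsIcc : s ∈ Icc 0 T := hsA.1
  -- a sequence in A approaching `s` from the right
  have hex : ∀ n : ℕ, ∃ u, u ∈ A ∧ s < u ∧ u < s + 1 / ((n : ℝ) + 1) := by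
    intro n
    by_contra hcon
    push_neg at hcon
    obtain ⟨q, hq1, hq2⟩ := exists_rat_btwn
      (show s < s + 1 / ((n : ℝ) + 1) by
        have : (0:ℝ) < 1 / ((n : ℝ) + 1) := by positivity
        linarith)
    apply hsR
    refine mem_iUnion.2 ⟨q, hsA, hq1, ?_⟩
    rw [eq_empty_iff_forall_notMem]
    rintro v ⟨hvA, hv1, hv2⟩
    exact absurd (hcon v hvA hv1) (not_le.2 (hv2.trans hq2))
  choose u huA hus hub using hex
  set δ : ℕ → ℝ := fun n => u n - s with hδdef
  have hδpos : ∀ n, 0 < δ n := fun n => sub_pos.2 (hus n)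
  have hδlim : Tendsto δ atTop (𝓝[>] (0:ℝ)) := by
    rw [tendsto_nhdsWithin_iff]
    constructor
    · refine squeeze_zero (fun n => (hδpos n).le) (fun n => ?_)
        tendsto_one_div_add_atTop_nhds_zero_nat
      have := hub n; simp only [hδdef]; linarith
    · exact Eventually.of_forall fun n => hδpos n
  have havg := hls (fun _ => s) δ hδlim (Eventually.of_forall fun n => by
    simp [Metric.mem_closedBall, (hδpos n).le])
  -- per-n inequality
  have hkey : ∀ n, -(G' s) ≤ 2 * ⨍ x in Metric.closedBall s (δ n), ‖G' x - G' s‖ := by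
    intro n
    have hIccsub : Ioc s (u n) ⊆ Icc 0 T :=
      fun x hx => ⟨hsIcc.1.trans hx.1.le, hx.2.trans (huA n).1.2⟩
    have h0 : 0 ≤ ∫ x in Ioc s (u n), G' x := by
      have hcg : ∫ x in Ioc s (u n), G' x = ∫ x in Ioc s (u n), G x :=
        setIntegral_congr_fun measurableSet_Ioc fun x hx => indicator_of_mem (hIccsub hx) G
      rw [hcg, ← ydiff hG hy hsIcc ((huA n).1) (hus n).le, sub_nonneg]
      exact (huA n).2 s ⟨hsIcc.1, (hus n).le⟩
    have hIo : IntegrableOn (fun x => G' x - G' s) (Ioc s (u n)) volume :=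
      hG'i.integrableOn.sub (integrableOn_const
        (by rw [Real.volume_Ioc]; exact ENNReal.ofReal_ne_top))
    have hCb : IntegrableOn (fun x => G' x - G' s) (Metric.closedBall s (δ n)) volume :=
      hG'i.integrableOn.sub (integrableOn_const
        (by rw [Real.volume_closedBall]; exact ENNReal.ofReal_ne_top))
    have h1 : ∫ x in Ioc s (u n), (G' x - G' s) =
        (∫ x in Ioc s (u n), G' x) - δ n * G' s := by
      have hci : IntegrableOn (fun _ : ℝ => G' s) (Ioc s (u n)) volume :=
        integrableOn_const (by rw [Real.volume_Ioc]; exact ENNReal.ofReal_ne_top)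
      rw [integral_sub hG'i.integrableOn hci,
        setIntegral_const, measureReal_def, Real.volume_Ioc, ENNReal.toReal_ofReal (hδpos n).le,
        smul_eq_mul]
    have h2 : δ n * (-(G' s)) ≤ ∫ x in Ioc s (u n), (G' x - G' s) := by
      rw [h1]; nlinarith [h0]
    have hIocsub : Ioc s (u n) ⊆ Metric.closedBall s (δ n) := by
      intro x hx
      rw [Real.closedBall_eq_Icc]
      exact ⟨by linarith [hx.1.le, (hδpos n).le], by have := hx.2; simp only [hδdef]; linarith⟩
    have h3 : ∫ x in Ioc s (u n), (G' x - G' s) ≤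
        ∫ x in Metric.closedBall s (δ n), ‖G' x - G' s‖ := by
      calc ∫ x in Ioc s (u n), (G' x - G' s)
          ≤ ∫ x in Ioc s (u n), ‖G' x - G' s‖ := by
            refine setIntegral_mono hIo hIo.norm ?_
            intro x; exact le_abs_self _
        _ ≤ ∫ x in Metric.closedBall s (δ n), ‖G' x - G' s‖ := by
            refine setIntegral_mono_set hCb.norm
              (Eventually.of_forall fun x => norm_nonneg _) (hIocsub.eventuallyLE)
    have h4 : ∫ x in Metric.closedBall s (δ n), ‖G' x - G' s‖ =
        (2 * δ n) * ⨍ x in Metric.closedBall s (δ n), ‖G' x - G' s‖ := by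
      rw [setAverage_eq, measureReal_def, Real.volume_closedBall, ENNReal.toReal_ofReal (by linarith [hδpos n]),
        smul_eq_mul, ← mul_assoc, mul_inv_cancel₀ (ne_of_gt (by linarith [hδpos n])), one_mul]
    have h5 : δ n * (-(G' s)) ≤ (2 * δ n) * ⨍ x in Metric.closedBall s (δ n), ‖G' x - G' s‖ := by
      rw [← h4]; exact h2.trans h3
    have h6 : δ n * (-(G' s)) ≤ δ n * (2 * ⨍ x in Metric.closedBall s (δ n), ‖G' x - G' s‖) := by
      calc δ n * (-(G' s)) ≤ (2 * δ n) * ⨍ x in Metric.closedBall s (δ n), ‖G' x - G' s‖ := h5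
        _ = δ n * (2 * ⨍ x in Metric.closedBall s (δ n), ‖G' x - G' s‖) := by ring
    exact le_of_mul_le_mul_left h6 (hδpos n)
  have hlim2 : Tendsto (fun n => 2 * ⨍ x in Metric.closedBall s (δ n), ‖G' x - G' s‖)
      atTop (𝓝 0) := by
    have := havg.const_mul 2
    simpa using this
  have hfin : -(G' s) ≤ 0 := ge_of_tendsto hlim2 (Eventually.of_forall hkey)
  have : G' s = G s := indicator_of_mem hsIcc G
  linarith [this ▸ hfin]


lemma key (hT : 0 ≤ T) (hG : IntegrableOn G (Icc 0 T))
    (hy : ∀ t ∈ Icc 0 T, y t = y 0 + ∫ s in (0:ℝ)..t, G s) :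
    ∃ A : Set ℝ, MeasurableSet A ∧ ∀ t ∈ Icc 0 T,
      sSup (y '' Icc 0 t) = y 0 + ∫ s in Ioc 0 t, A.indicator (fun x => max (G x) 0) s := by
  have hycont : ContinuousOn y (Icc 0 T) := by
    have h1 : ContinuousOn (fun t => y 0 + ∫ s in (0:ℝ)..t, G s) (Icc 0 T) := by
      refine continuousOn_const.add ?_
      have h2 : IntegrableOn G (uIcc 0 T) := by rwa [uIcc_of_le hT]
      have := intervalIntegral.continuousOn_primitive_interval h2
      rwa [uIcc_of_le hT] at this
    exact h1.congr hy
  set A := mset T y with hA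
  have hAcl := mset_closed hycont
  refine ⟨A, hAcl.measurableSet, ?_⟩
  intro t ht
  set a := sSup (A ∩ Icc 0 t) with hadef
  have hbdd : BddAbove (A ∩ Icc 0 t) := BddAbove.mono inter_subset_right bddAbove_Icc
  have hane : (A ∩ Icc 0 t).Nonempty := ⟨0, zero_mem_mset hT, le_refl 0, ht.1⟩
  have hamem : a ∈ A ∩ Icc 0 t := (hAcl.inter isClosed_Icc).csSup_mem hane hbdd
  have haA : a ∈ A := hamem.1
  have hat : a ≤ t := hamem.2.2
  have haT : a ∈ Icc 0 T := haA.1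
  obtain ⟨w, ⟨hwA, hwt⟩, hwg⟩ := exists_max hycont ht
  have hsup : sSup (y '' Icc 0 t) = y w := hwg.csSup_eq
  have hwa : y w = y a := by
    refine le_antisymm ?_ (hwg.2 (mem_image_of_mem y hamem.2))
    have hwa' : w ≤ a := le_csSup hbdd ⟨hwA, hwt⟩
    exact haA.2 w ⟨hwt.1, hwa'⟩
  set g : ℝ → ℝ := A.indicator (fun x => max (G x) 0) with hgdef
  have hGp : IntegrableOn (fun x => max (G x) 0) (Icc 0 T) := hG.pos_part
  have hgint : IntegrableOn g (Icc 0 T) := hGp.indicator hAcl.measurableSet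
  have hsub1 : Ioc 0 a ⊆ Icc 0 T := Ioc_subset_Icc_self.trans (Icc_subset_Icc_right haT.2)
  have hsub2 : Ioc a t ⊆ Icc 0 T := fun x hx =>
    ⟨haT.1.trans hx.1.le, hx.2.trans ht.2⟩
  have hsplit : ∫ s in Ioc 0 t, g s = (∫ s in Ioc 0 a, g s) + ∫ s in Ioc a t, g s := by
    rw [← Ioc_union_Ioc_eq_Ioc haT.1 hat,
      setIntegral_union (Ioc_disjoint_Ioc_of_le le_rfl) measurableSet_Ioc
        (hgint.mono_set hsub1) (hgint.mono_set hsub2)]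
  have h2z : ∫ s in Ioc a t, g s = 0 := by
    have : ∀ x ∈ Ioc a t, g x = 0 := by
      intro x hx
      refine indicator_of_notMem ?_ _
      intro hxA
      have : x ≤ a := le_csSup hbdd ⟨hxA, ⟨haT.1.trans hx.1.le, hx.2⟩⟩
      exact absurd this (not_le.2 hx.1)
    rw [setIntegral_congr_fun measurableSet_Ioc this, integral_zero]
  have hind : ∫ s in Ioc 0 a, g s = ∫ x in Ioc 0 a ∩ A, max (G x) 0 := by
    rw [hgdef, setIntegral_indicator hAcl.measurableSet]
  have hae : ∫ x in Ioc 0 a ∩ A, max (G x) 0 = ∫ x in Ioc 0 a ∩ A, G x := by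
    apply integral_congr_ae
    have h' : ∀ᵐ x ∂(volume.restrict (Ioc 0 a ∩ A)), 0 ≤ G x :=
      ae_restrict_of_ae_restrict_of_subset inter_subset_right
        (ae_nonneg hG hycont hy)
    filter_upwards [h'] with x hx using max_eq_left hx
  have hdiffeq : Ioc 0 a \ A = Ioo 0 a \ A := by
    ext x
    constructor
    · rintro ⟨hx1, hx2⟩
      refine ⟨⟨hx1.1, lt_of_le_of_ne hx1.2 ?_⟩, hx2⟩
      intro h; exact hx2 (h ▸ haA)
    · rintro ⟨hx1, hx2⟩
      exact ⟨⟨hx1.1, hx1.2.le⟩, hx2⟩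
  have hsplit2 : ∫ x in Ioc 0 a, G x = (∫ x in Ioc 0 a ∩ A, G x) + ∫ x in Ioc 0 a \ A, G x := by
    rw [← setIntegral_union (Set.disjoint_left.2 fun x hx1 hx2 => hx2.2 hx1.2)
      (measurableSet_Ioc.diff hAcl.measurableSet)
      ((hG.mono_set hsub1).mono_set inter_subset_left)
      ((hG.mono_set hsub1).mono_set diff_subset), inter_union_diff]
  have hgap : ∫ x in Ioc 0 a \ A, G x = 0 := by
    rw [hdiffeq]; exact integral_gap_zero hT hG hycont hy haA
  have hya : y a - y 0 = ∫ x in Ioc 0 a, G x :=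
    ydiff hG hy ⟨le_refl 0, hT⟩ haT haT.1
  rw [hsup, hwa]
  rw [hsplit, h2z, hind, hae]
  linarith [hya, hsplit2, hgap]

end Stmt0Aux

/-- the running maximum `z` of an absolutely continuous function
`y(t) = y(0) + ∫₀ᵗ G(s) ds` satisfies `z(T) = sup_{[0,T]} y` and can be generated
by the dynamics `ż = max(G,0)(1-v)` for a measurable bang-bang control `v` with
values in `{0,1}`. -/
theorem stmt0 (T : ℝ) (hT : 0 < T) (G : ℝ → ℝ) (hG : IntegrableOn G (Icc 0 T))
    (y : ℝ → ℝ) (hy : ∀ t ∈ Icc 0 T, y t = y 0 + ∫ s in (0:ℝ)..t, G s)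
    (z : ℝ → ℝ) (hz : ∀ t ∈ Icc 0 T, z t = sSup (y '' Icc 0 t)) :
    z T = sSup (y '' Icc 0 T) ∧
    ∃ v : ℝ → ℝ, Measurable v ∧ (∀ t, v t ∈ ({0, 1} : Set ℝ)) ∧
      ∀ t ∈ Icc 0 T, z t = y 0 + ∫ s in (0:ℝ)..t, max (G s) 0 * (1 - v s) := by

  obtain ⟨A, hAm, hAkey⟩ := Stmt0Aux.key hT.le hG hy
  refine ⟨hz T ⟨hT.le, le_refl T⟩, ?_⟩
  refine ⟨fun s => 1 - A.indicator (fun _ => (1:ℝ)) s, ?_, ?_, ?_⟩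
  · exact measurable_const.sub (measurable_const.indicator hAm)
  · intro t
    by_cases h : t ∈ A <;> simp [h]
  · intro t ht
    rw [hz t ht, hAkey t ht, intervalIntegral.integral_of_le ht.1]
    congr 1
    apply integral_congr_ae
    filter_upwards with s
    by_cases h : s ∈ A <;> simp [h]
end

section
/- Let T > 0 and let y, z : [0,T] → ℝ satisfy y(t) = y(0) + ∫₀ᵗ G(s) ds and z(t) = z(0) + ∫₀ᵗ H(s) ds for all t ∈ [0,T], where G, H : [0,T] → ℝ are Lebesgue integrable. Assume z(0) ≥ y(0) and H(t) ≥ G(t) for almost every t ∈ [0,T] such that z(t) < y(t). Then z(t) ≥ y(t) for all t ∈ [0,T]. -/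
open MeasureTheory Set

/-- comparison lemma. If `y(t) = y(0) + ∫₀ᵗ G` and
`z(t) = z(0) + ∫₀ᵗ H` with `z(0) ≥ y(0)` and `H ≥ G` a.e. on the set where
`z < y`, then `z ≥ y` on `[0,T]`. -/
theorem stmt1 (T : ℝ) (hT : 0 < T) (G H : ℝ → ℝ)
    (hG : IntegrableOn G (Icc 0 T)) (hH : IntegrableOn H (Icc 0 T))
    (y z : ℝ → ℝ)
    (hy : ∀ t ∈ Icc 0 T, y t = y 0 + ∫ s in (0:ℝ)..t, G s)
    (hz : ∀ t ∈ Icc 0 T, z t = z 0 + ∫ s in (0:ℝ)..t, H s)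
    (h0 : z 0 ≥ y 0)
    (hdom : ∀ᵐ t ∂(volume.restrict (Icc 0 T)), z t < y t → H t ≥ G t) :
    ∀ t ∈ Icc 0 T, z t ≥ y t := by
  set f : ℝ → ℝ := fun s => H s - G s with hfdef
  have hfi : IntegrableOn f (Icc 0 T) := hH.sub hG
  set φ : ℝ → ℝ := fun t => z 0 - y 0 + ∫ s in (0:ℝ)..t, f s with hφdef
  have hsub : ∀ a b : ℝ, a ∈ Icc 0 T → b ∈ Icc 0 T → IntervalIntegrable f volume a b := by
    intro a b ha hb
    refine (hfi.mono_set ?_).intervalIntegrable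
    exact uIcc_subset_Icc ha hb
  have hzy : ∀ t ∈ Icc 0 T, z t - y t = φ t := by
    intro t ht
    rw [hz t ht, hy t ht, hφdef]
    have hI : ∫ s in (0:ℝ)..t, f s =
        (∫ s in (0:ℝ)..t, H s) - ∫ s in (0:ℝ)..t, G s := by
      have h0T : (0:ℝ) ∈ Icc 0 T := ⟨le_rfl, hT.le⟩
      exact intervalIntegral.integral_sub
        ((hH.mono_set (uIcc_subset_Icc h0T ht)).intervalIntegrable)
        ((hG.mono_set (uIcc_subset_Icc h0T ht)).intervalIntegrable)
    simp only [hI]; ring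
  suffices hkey : ∀ t ∈ Icc 0 T, 0 ≤ φ t by
    intro t ht
    have := hkey t ht
    rw [← hzy t ht] at this
    linarith
  have hcont : ContinuousOn φ (Icc 0 T) := by
    have : ContinuousOn (fun t => ∫ s in (0:ℝ)..t, f s) (Icc 0 T) := by
      have := intervalIntegral.continuousOn_primitive_interval (a := 0) (b := T)
        (f := f) (μ := volume) (by rwa [uIcc_of_le hT.le])
      rwa [uIcc_of_le hT.le] at this
    exact continuousOn_const.add this
  by_contra hcon
  push_neg at hcon
  obtain ⟨t₀, ht₀, hneg⟩ := hcon
  set S : Set ℝ := {t ∈ Icc 0 t₀ | 0 ≤ φ t} with hSdef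
  have hsubT : Icc 0 t₀ ⊆ Icc 0 T := Icc_subset_Icc le_rfl ht₀.2
  have hφ0 : φ 0 = z 0 - y 0 := by simp [hφdef]
  have h0S : (0:ℝ) ∈ S := ⟨⟨le_rfl, ht₀.1⟩, by rw [hφ0]; linarith⟩
  have hScomp : IsCompact S := by
    have hclosed : IsClosed S := by
      have : S = (Icc 0 t₀) ∩ (Icc 0 t₀ ∩ φ ⁻¹' (Ici 0)) := by
        ext x; simp only [hSdef, mem_setOf_eq, mem_inter_iff, mem_preimage, mem_Ici]; tauto
      rw [this]
      exact isClosed_Icc.inter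
        ((hcont.mono hsubT).preimage_isClosed_of_isClosed isClosed_Icc isClosed_Ici)
    exact isCompact_Icc.of_isClosed_subset hclosed (fun x hx => hx.1)
  have hSne : S.Nonempty := ⟨0, h0S⟩
  set σ := sSup S with hσdef
  have hσS : σ ∈ S := hScomp.sSup_mem hSne
  have hσIcc : σ ∈ Icc 0 T := hsubT hσS.1
  have hσφ : 0 ≤ φ σ := hσS.2
  have hσlt : σ < t₀ := by
    rcases lt_or_eq_of_le hσS.1.2 with h | h
    · exact h
    · exfalso; rw [h] at hσφ; linarith
  have hIoc_neg : ∀ t ∈ Ioc σ t₀, φ t < 0 := by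
    intro t ht
    by_contra hge
    push_neg at hge
    have : t ∈ S := ⟨⟨le_trans hσS.1.1 ht.1.le, ht.2⟩, hge⟩
    have := le_csSup hScomp.bddAbove this
    exact absurd this (not_le.mpr ht.1)
  -- the integral over Ioc σ t₀ is nonneg
  have hIocsub : Ioc σ t₀ ⊆ Icc 0 T := fun x hx =>
    ⟨le_trans hσIcc.1 hx.1.le, le_trans hx.2 ht₀.2⟩
  have hae : ∀ᵐ t ∂(volume.restrict (Ioc σ t₀)), z t < y t → H t ≥ G t :=
    ae_restrict_of_ae_restrict_of_subset hIocsub hdom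
  have hmem : ∀ᵐ t ∂(volume.restrict (Ioc σ t₀)), t ∈ Ioc σ t₀ :=
    ae_restrict_mem measurableSet_Ioc
  have hf_nonneg : ∀ᵐ t ∂(volume.restrict (Ioc σ t₀)), 0 ≤ f t := by
    filter_upwards [hae, hmem] with t h1 h2
    have hzlt : z t < y t := by
      have := hzy t (hIocsub h2)
      have := hIoc_neg t h2
      linarith
    have := h1 hzlt
    simp [hfdef]; linarith
  have hint_nonneg : 0 ≤ ∫ s in σ..t₀, f s := by
    rw [intervalIntegral.integral_of_le hσlt.le]
    exact integral_nonneg_of_ae hf_nonneg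
  have hadd : (∫ s in (0:ℝ)..σ, f s) + (∫ s in σ..t₀, f s) = ∫ s in (0:ℝ)..t₀, f s :=
    intervalIntegral.integral_add_adjacent_intervals
      (hsub 0 σ ⟨le_rfl, hT.le⟩ hσIcc)
      (hsub σ t₀ hσIcc (hsubT ⟨ht₀.1, le_rfl⟩))
  have : φ σ ≤ φ t₀ := by
    simp only [hφdef, ← hadd]; linarith
  linarith
end

section
/- Let T > 0 and let y : [0,T] → ℝ satisfy y(t) = y(0) + ∫₀ᵗ G(s) ds for all t ∈ [0,T], where G : [0,T] → ℝ is Lebesgue integrable. For a measurable function v : [0,T] → [0,1], set z_v(t) := y(0) + ∫₀ᵗ max(G(s),0)·(1 − v(s)) ds, and call v admissible if z_v(t) ≥ y(t) for all t ∈ [0,T]. Then: (i) for every admissible v one has z_v(T) ≥ sup_{t ∈ [0,T]} y(t); (ii) there exists an admissible v taking values in {0,1} with z_v(T) = sup_{t ∈ [0,T]} y(t); consequently the infimum of z_v(T) over admissible v is attained and equals sup_{t ∈ [0,T]} y(t). -/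
open MeasureTheory Set

/-- Proposition 1 of the paper: for a fixed absolutely continuous
`y(t) = y(0) + ∫₀ᵗ G`, among the measurable controls `v : [0,T] → [0,1]` whose
associated state `z_v(t) = y(0) + ∫₀ᵗ max(G,0)(1-v)` satisfies the constraint
`z_v ≥ y` on `[0,T]`, (i) every admissible `v` has `z_v(T) ≥ sup_{[0,T]} y`;
(ii) some admissible `v` with values in `{0,1}` attains `z_v(T) = sup_{[0,T]} y`;
consequently the infimum of `z_v(T)` over admissible controls is attained and
equals `sup_{[0,T]} y`. -/
theorem stmt2 (T : ℝ) (hT : 0 < T) (G : ℝ → ℝ) (hG : IntegrableOn G (Icc 0 T))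
    (y : ℝ → ℝ) (hy : ∀ t ∈ Icc 0 T, y t = y 0 + ∫ s in (0:ℝ)..t, G s) :
    (∀ v : ℝ → ℝ, Measurable v → (∀ t, v t ∈ Icc (0:ℝ) 1) →
      (∀ t ∈ Icc 0 T, y 0 + (∫ s in (0:ℝ)..t, max (G s) 0 * (1 - v s)) ≥ y t) →
      y 0 + (∫ s in (0:ℝ)..T, max (G s) 0 * (1 - v s)) ≥ sSup (y '' Icc 0 T)) ∧
    (∃ v : ℝ → ℝ, Measurable v ∧ (∀ t, v t ∈ ({0, 1} : Set ℝ)) ∧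
      (∀ t, v t ∈ Icc (0:ℝ) 1) ∧
      (∀ t ∈ Icc 0 T, y 0 + (∫ s in (0:ℝ)..t, max (G s) 0 * (1 - v s)) ≥ y t) ∧
      y 0 + (∫ s in (0:ℝ)..T, max (G s) 0 * (1 - v s)) = sSup (y '' Icc 0 T)) ∧
    IsLeast {r : ℝ | ∃ v : ℝ → ℝ, Measurable v ∧ (∀ t, v t ∈ Icc (0:ℝ) 1) ∧
      (∀ t ∈ Icc 0 T, y 0 + (∫ s in (0:ℝ)..t, max (G s) 0 * (1 - v s)) ≥ y t) ∧
      r = y 0 + ∫ s in (0:ℝ)..T, max (G s) 0 * (1 - v s)}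
      (sSup (y '' Icc 0 T)) := by
  have hT0 : (0:ℝ) ≤ T := hT.le
  set S := sSup (y '' Icc 0 T) with hSdef
  -- continuity of y on [0, T]
  have hprim : ContinuousOn (fun t => ∫ s in (0:ℝ)..t, G s) (Icc 0 T) := by
    have h := intervalIntegral.continuousOn_primitive_interval
      (a := (0:ℝ)) (b := T) (μ := volume) (f := G) (by rwa [uIcc_of_le hT0])
    rwa [uIcc_of_le hT0] at h
  have hycont : ContinuousOn y (Icc 0 T) := (continuousOn_const.add hprim).congr hy
  have hne : (Icc (0:ℝ) T).Nonempty := ⟨0, le_refl 0, hT0⟩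
  have hbdd : BddAbove (y '' Icc 0 T) :=
    (isCompact_Icc.image_of_continuousOn hycont).bddAbove
  have hyleS : ∀ t ∈ Icc (0:ℝ) T, y t ≤ S := fun t ht =>
    le_csSup hbdd (mem_image_of_mem _ ht)
  -- integrability of the controlled integrand
  have key : ∀ v : ℝ → ℝ, Measurable v → (∀ t, v t ∈ Icc (0:ℝ) 1) →
      IntegrableOn (fun s => max (G s) 0 * (1 - v s)) (Icc 0 T) := by
    intro v hv hv01
    refine Integrable.mono hG ?_ ?_
    · exact ((hG.aestronglyMeasurable.aemeasurable.max aemeasurable_const).mul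
        (aemeasurable_const.sub hv.aemeasurable)).aestronglyMeasurable
    · refine ae_of_all _ fun s => ?_
      rw [Real.norm_eq_abs, Real.norm_eq_abs]
      have h1 : (0:ℝ) ≤ max (G s) 0 := le_max_right _ _
      have h2 : (0:ℝ) ≤ 1 - v s := by have := (hv01 s).2; linarith
      have h2' : 1 - v s ≤ 1 := by have := (hv01 s).1; linarith
      have h3 : max (G s) 0 ≤ |G s| := max_le (le_abs_self _) (abs_nonneg _)
      calc |max (G s) 0 * (1 - v s)| = max (G s) 0 * (1 - v s) :=
            abs_of_nonneg (mul_nonneg h1 h2)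
        _ ≤ max (G s) 0 * 1 := mul_le_mul_of_nonneg_left h2' h1
        _ ≤ |G s| := by rw [mul_one]; exact h3
  -- interval integrability helper
  have II : ∀ f : ℝ → ℝ, IntegrableOn f (Icc 0 T) → ∀ a b : ℝ, 0 ≤ a → a ≤ b → b ≤ T →
      IntervalIntegrable f volume a b := by
    intro f hf a b ha hab hbT
    exact (hf.mono_set (by rw [uIcc_of_le hab]; exact Icc_subset_Icc ha hbT)).intervalIntegrable
  -- Part (i)
  have part1 : ∀ v : ℝ → ℝ, Measurable v → (∀ t, v t ∈ Icc (0:ℝ) 1) →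
      (∀ t ∈ Icc 0 T, y 0 + (∫ s in (0:ℝ)..t, max (G s) 0 * (1 - v s)) ≥ y t) →
      y 0 + (∫ s in (0:ℝ)..T, max (G s) 0 * (1 - v s)) ≥ S := by
    intro v hv hv01 hadm
    have hint := key v hv hv01
    refine csSup_le (hne.image y) ?_
    rintro x ⟨t, ht, rfl⟩
    refine le_trans (hadm t ht) ?_
    have hsplit := intervalIntegral.integral_add_adjacent_intervals
      (II _ hint 0 t le_rfl ht.1 ht.2) (II _ hint t T ht.1 ht.2 le_rfl)
    have hnn : 0 ≤ ∫ s in t..T, max (G s) 0 * (1 - v s) := by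
      refine intervalIntegral.integral_nonneg ht.2 fun u _ => ?_
      exact mul_nonneg (le_max_right _ _) (by have := (hv01 u).2; linarith)
    linarith
  -- maximizer of y
  obtain ⟨τ, hτ, hmax⟩ := isCompact_Icc.exists_isMaxOn hne hycont
  have hSval : S = y τ :=
    IsGreatest.csSup_eq ⟨mem_image_of_mem _ hτ, by rintro x ⟨t, ht, rfl⟩; exact hmax ht⟩
  -- the primitive of G⁺
  set Φ : ℝ → ℝ := fun t => ∫ s in (0:ℝ)..t, max (G s) 0 with hΦdef
  have hGp : IntegrableOn (fun s => max (G s) 0) (Icc 0 T) := hG.pos_part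
  have hΦcont : ContinuousOn Φ (Icc 0 T) := by
    have h := intervalIntegral.continuousOn_primitive_interval
      (a := (0:ℝ)) (b := T) (μ := volume) (f := fun s => max (G s) 0)
      (by rwa [uIcc_of_le hT0])
    rwa [uIcc_of_le hT0] at h
  -- monotonicity-type bound : ∫₀ᵗ G ≤ Φ t for t ∈ [0,T]
  have hGleΦ : ∀ t ∈ Icc (0:ℝ) T, (∫ s in (0:ℝ)..t, G s) ≤ Φ t := by
    intro t ht
    exact intervalIntegral.integral_mono_on ht.1
      (II _ hG 0 t le_rfl ht.1 ht.2) (II _ hGp 0 t le_rfl ht.1 ht.2)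
      (fun x _ => le_max_left _ _)
  have hy0S : y 0 ≤ S := hyleS 0 ⟨le_refl 0, hT0⟩
  have hΦτ : S - y 0 ≤ Φ τ := by
    have := hGleΦ τ hτ
    have hyτ := hy τ hτ
    rw [hSval]; linarith
  have hΦ0 : Φ 0 = 0 := intervalIntegral.integral_same
  -- IVT: find the cutoff c
  have hIVT := intermediate_value_Icc hτ.1 (hΦcont.mono (Icc_subset_Icc le_rfl hτ.2))
  obtain ⟨c, hc, hΦc⟩ : ∃ c ∈ Icc 0 τ, Φ c = S - y 0 := by
    have : S - y 0 ∈ Icc (Φ 0) (Φ τ) := by rw [hΦ0]; exact ⟨by linarith, hΦτ⟩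
    exact hIVT this
  have hc0 : (0:ℝ) ≤ c := hc.1
  have hcT : c ≤ T := le_trans hc.2 hτ.2
  -- the bang-bang control
  set v : ℝ → ℝ := fun s => if s ≤ c then (0:ℝ) else 1 with hvdef
  have hvmeas : Measurable v := Measurable.ite measurableSet_Iic
    measurable_const measurable_const
  have hv01 : ∀ t, v t ∈ Icc (0:ℝ) 1 := by
    intro t; by_cases h : t ≤ c <;> simp [hvdef, h]
  have hv2 : ∀ t, v t ∈ ({0, 1} : Set ℝ) := by
    intro t; by_cases h : t ≤ c <;> simp [hvdef, h]
  -- the controlled integrand is the indicator of Iic c applied to G⁺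
  have hfun : (fun s => max (G s) 0 * (1 - v s))
      = (Iic c).indicator (fun s => max (G s) 0) := by
    funext s
    by_cases h : s ≤ c
    · rw [indicator_of_mem (mem_Iic.mpr h)]; simp [hvdef, h]
    · rw [indicator_of_notMem (by simpa using h)]; simp [hvdef, h]
  -- the state value: z t = y 0 + Φ (min t c)
  have hz : ∀ t ∈ Icc (0:ℝ) T,
      (∫ s in (0:ℝ)..t, max (G s) 0 * (1 - v s)) = Φ (min t c) := by
    intro t ht
    rw [hfun]
    have hmin0 : (0:ℝ) ≤ min t c := le_min ht.1 hc0
    rw [intervalIntegral.integral_of_le ht.1]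
    rw [MeasureTheory.setIntegral_indicator measurableSet_Iic]
    have hset : Ioc (0:ℝ) t ∩ Iic c = Ioc 0 (min t c) := by
      ext x
      simp only [mem_inter_iff, mem_Ioc, mem_Iic, le_min_iff]
      constructor
      · rintro ⟨⟨h1, h2⟩, h3⟩; exact ⟨h1, h2, h3⟩
      · rintro ⟨h1, h2, h3⟩; exact ⟨⟨h1, h2⟩, h3⟩
    rw [hset]
    exact (intervalIntegral.integral_of_le hmin0).symm
  -- admissibility of v
  have hadm : ∀ t ∈ Icc (0:ℝ) T,
      y 0 + (∫ s in (0:ℝ)..t, max (G s) 0 * (1 - v s)) ≥ y t := by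
    intro t ht
    rw [hz t ht]
    by_cases h : t ≤ c
    · rw [min_eq_left h]
      have h1 := hGleΦ t ht
      have h2 := hy t ht
      linarith
    · rw [min_eq_right (le_of_not_ge h)]
      rw [hΦc]
      have := hyleS t ht
      linarith
  -- optimality of v
  have hopt : y 0 + (∫ s in (0:ℝ)..T, max (G s) 0 * (1 - v s)) = S := by
    rw [hz T ⟨hT0, le_rfl⟩, min_eq_right hcT, hΦc]; ring
  refine ⟨part1, ⟨v, hvmeas, hv2, hv01, hadm, hopt⟩, ?_, ?_⟩
  · exact ⟨v, hvmeas, hv01, hadm, hopt.symm⟩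
  · rintro r ⟨w, hw, hw01, hwadm, rfl⟩
    exact part1 w hw hw01 hwadm
end

section
/- Let T > 0 and let y : [0,T] → ℝ satisfy y(t) = y(0) + ∫₀ᵗ G(s) ds for all t ∈ [0,T], where G : [0,T] → ℝ is Lebesgue integrable. Let v : [0,T] → [0,1] be measurable and set z(t) := y(0) + ∫₀ᵗ max(G(s),0)·(1 − v(s)) ds. If the mixed constraint max(y(t) − z(t), 0)·(1 − v(t)) + z(t) − y(t) ≥ 0 holds for almost every t ∈ [0,T], then z(t) ≥ y(t) for all t ∈ [0,T]. -/
open MeasureTheory Set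

/-- core of Proposition 3 of the paper: if
`z(t) = y(0) + ∫₀ᵗ max(G,0)(1-v)` and the mixed constraint
`max(y-z,0)(1-v) + z - y ≥ 0` holds a.e. on `[0,T]`, then `z ≥ y` on `[0,T]`. -/
theorem stmt3 (T : ℝ) (hT : 0 < T) (G : ℝ → ℝ) (hG : IntegrableOn G (Icc 0 T))
    (y : ℝ → ℝ) (hy : ∀ t ∈ Icc 0 T, y t = y 0 + ∫ s in (0:ℝ)..t, G s)
    (v : ℝ → ℝ) (hv : Measurable v) (hv01 : ∀ t, v t ∈ Icc (0:ℝ) 1)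
    (z : ℝ → ℝ)
    (hz : ∀ t ∈ Icc 0 T, z t = y 0 + ∫ s in (0:ℝ)..t, max (G s) 0 * (1 - v s))
    (hmixed : ∀ᵐ t ∂(volume.restrict (Icc 0 T)),
      max (y t - z t) 0 * (1 - v t) + z t - y t ≥ 0) :
    ∀ t ∈ Icc 0 T, z t ≥ y t := by
  set p : ℝ → ℝ := fun s => max (G s) 0 * (1 - v s) with hp_def
  have hp_int : IntegrableOn p (Icc 0 T) := by
    apply Integrable.mono hG
    · exact (hG.aestronglyMeasurable.sup aestronglyMeasurable_const).mul
        (aestronglyMeasurable_const.sub hv.aestronglyMeasurable)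
    · filter_upwards with s
      have hv0 := (hv01 s).1
      have hv1 := (hv01 s).2
      simp only [Real.norm_eq_abs, hp_def, abs_mul]
      have h1 : |max (G s) 0| ≤ |G s| := by
        rw [abs_of_nonneg (le_max_right _ _)]
        exact max_le (le_abs_self _) (abs_nonneg _)
      have h2 : |1 - v s| ≤ 1 := abs_le.mpr ⟨by linarith, by linarith⟩
      calc |max (G s) 0| * |1 - v s| ≤ |G s| * 1 :=
            mul_le_mul h1 h2 (abs_nonneg _) (abs_nonneg _)
        _ = |G s| := mul_one _
  have hh_int : IntegrableOn (fun s => p s - G s) (Icc 0 T) := hp_int.sub hG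
  -- interval integrability on subintervals
  have hsub : ∀ a b : ℝ, a ∈ Icc (0:ℝ) T → b ∈ Icc (0:ℝ) T → uIcc a b ⊆ Icc 0 T :=
    fun a b ha hb => (ordConnected_Icc).uIcc_subset ha hb
  have hIIp : ∀ a b : ℝ, a ∈ Icc (0:ℝ) T → b ∈ Icc (0:ℝ) T →
      IntervalIntegrable p volume a b :=
    fun a b ha hb => (hp_int.mono_set (hsub a b ha hb)).intervalIntegrable
  have hIIG : ∀ a b : ℝ, a ∈ Icc (0:ℝ) T → b ∈ Icc (0:ℝ) T →
      IntervalIntegrable G volume a b :=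
    fun a b ha hb => (hG.mono_set (hsub a b ha hb)).intervalIntegrable
  have hIIh : ∀ a b : ℝ, a ∈ Icc (0:ℝ) T → b ∈ Icc (0:ℝ) T →
      IntervalIntegrable (fun s => p s - G s) volume a b :=
    fun a b ha hb => (hIIp a b ha hb).sub (hIIG a b ha hb)
  have h0T : (0:ℝ) ∈ Icc (0:ℝ) T := ⟨le_refl _, hT.le⟩
  set w : ℝ → ℝ := fun t => ∫ s in (0:ℝ)..t, (p s - G s) with hw_def
  have hw0 : w 0 = 0 := intervalIntegral.integral_same
  have hwzy : ∀ t ∈ Icc (0:ℝ) T, w t = z t - y t := by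
    intro t ht
    rw [hz t ht, hy t ht, hw_def]
    simp only
    rw [intervalIntegral.integral_sub (hIIp 0 t h0T ht) (hIIG 0 t h0T ht)]
    ring
  have hcont : ContinuousOn w (Icc 0 T) := by
    have := intervalIntegral.continuousOn_primitive_interval
      (f := fun s => p s - G s) (μ := volume) (a := 0) (b := T)
      (by rwa [uIcc_of_le hT.le])
    rwa [uIcc_of_le hT.le] at this
  have hkey : ∀ᵐ s ∂(volume.restrict (Icc 0 T)), w s < 0 → 0 ≤ p s - G s := by
    filter_upwards [hmixed, ae_restrict_mem measurableSet_Icc] with s hs hsmem hws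
    have hw := hwzy s hsmem
    have hmax : max (y s - z s) 0 = y s - z s := max_eq_left (by linarith)
    rw [hmax] at hs
    have hv0l := (hv01 s).1
    have hv0 : v s = 0 := le_antisymm (by nlinarith) hv0l
    have hle : G s ≤ max (G s) 0 := le_max_left _ _
    simp only [hp_def, hv0]
    linarith
  intro t ht
  by_contra h0
  push_neg at h0
  have hwt : w t < 0 := by rw [hwzy t ht]; linarith
  set S : Set ℝ := {s | s ∈ Icc 0 t ∧ 0 ≤ w s} with hS_def
  have hS0 : (0:ℝ) ∈ S := ⟨⟨le_refl _, ht.1⟩, by rw [hw0]⟩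
  have hSne : S.Nonempty := ⟨0, hS0⟩
  have hSbdd : BddAbove S := ⟨t, fun x hx => hx.1.2⟩
  have hSsub : S ⊆ Icc 0 T := fun x hx => ⟨hx.1.1, hx.1.2.trans ht.2⟩
  have hSclosed : IsClosed S := by
    have hcont' : ContinuousOn w (Icc 0 t) :=
      hcont.mono (Icc_subset_Icc le_rfl ht.2)
    have : S = Icc 0 t ∩ w ⁻¹' (Ici 0) := rfl
    rw [this]
    exact ContinuousOn.preimage_isClosed_of_isClosed hcont' isClosed_Icc isClosed_Ici
  set τ := sSup S with hτ_def
  have hτS : τ ∈ S := hSclosed.csSup_mem hSne hSbdd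
  have hτmem : τ ∈ Icc (0:ℝ) t := hτS.1
  have hτIcc : τ ∈ Icc (0:ℝ) T := hSsub hτS
  have hwτ : 0 ≤ w τ := hτS.2
  have hτlt : τ < t := by
    rcases lt_or_eq_of_le hτmem.2 with h | h
    · exact h
    · exfalso; rw [h] at hwτ; linarith
  have hneg : ∀ s ∈ Ioc τ t, w s < 0 := by
    intro s hs
    by_contra hc
    push_neg at hc
    have hsS : s ∈ S := ⟨⟨hτmem.1.trans hs.1.le, hs.2⟩, hc⟩
    exact absurd (le_csSup hSbdd hsS) (not_le.mpr hs.1)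
  have hIocsub : Ioc τ t ⊆ Icc 0 T :=
    fun s hs => ⟨hτmem.1.trans hs.1.le, hs.2.trans ht.2⟩
  have hint_nonneg : 0 ≤ ∫ s in τ..t, (p s - G s) := by
    rw [intervalIntegral.integral_of_le hτlt.le]
    apply setIntegral_nonneg_of_ae_restrict
    have h1 : ∀ᵐ s ∂(volume.restrict (Ioc τ t)), w s < 0 → 0 ≤ p s - G s :=
      ae_restrict_of_ae_restrict_of_subset hIocsub hkey
    filter_upwards [h1, ae_restrict_mem measurableSet_Ioc] with s hs hsmem
    exact hs (hneg s hsmem)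
  have hadd : w τ + ∫ s in τ..t, (p s - G s) = w t :=
    intervalIntegral.integral_add_adjacent_intervals
      (hIIh 0 τ h0T hτIcc) (hIIh τ t hτIcc ht)
  linarith
end

section
/- Let T > 0 and let y : [0,T] → ℝ satisfy y(t) = y(0) + ∫₀ᵗ G(s) ds for all t ∈ [0,T], where G : [0,T] → ℝ is Lebesgue integrable. Let w : [0,T] → [0,1] be measurable and let z : [0,T] → ℝ satisfy z(t) = y(0) + ∫₀ᵗ max(G(s),0)·(1 − w(s)·𝟙_{ℝ₊}(z(s) − y(s))) ds for all t ∈ [0,T], where 𝟙_{ℝ₊}(ζ) = 1 if ζ ≥ 0 and 0 if ζ < 0. Then z is nondecreasing on [0,T], z(t) ≥ y(t) for all t ∈ [0,T], and z(T) ≥ sup_{t ∈ [0,T]} y(t). -/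
open MeasureTheory Set

/-- lower bound in the proof of Proposition 4 of the paper: any
absolutely continuous solution of `ż = max(G,0)(1 - w·𝟙_{ℝ₊}(z-y))`, `z(0)=y(0)`,
is nondecreasing, dominates `y` on `[0,T]`, and satisfies
`z(T) ≥ sup_{[0,T]} y`. Here `𝟙_{ℝ₊}(ζ) = 1` if `ζ ≥ 0` and `0` if `ζ < 0`. -/
theorem stmt4 (T : ℝ) (hT : 0 < T) (G : ℝ → ℝ) (hG : IntegrableOn G (Icc 0 T))
    (y : ℝ → ℝ) (hy : ∀ t ∈ Icc 0 T, y t = y 0 + ∫ s in (0:ℝ)..t, G s)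
    (w : ℝ → ℝ) (hw : Measurable w) (hw01 : ∀ t, w t ∈ Icc (0:ℝ) 1)
    (z : ℝ → ℝ)
    (hint : IntegrableOn
      (fun s => max (G s) 0 * (1 - w s * (if 0 ≤ z s - y s then (1:ℝ) else 0)))
      (Icc 0 T))
    (hz : ∀ t ∈ Icc 0 T, z t = y 0 +
      ∫ s in (0:ℝ)..t, max (G s) 0 * (1 - w s * (if 0 ≤ z s - y s then (1:ℝ) else 0))) :
    MonotoneOn z (Icc 0 T) ∧ (∀ t ∈ Icc 0 T, z t ≥ y t) ∧
      z T ≥ sSup (y '' Icc 0 T) := by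
  set F : ℝ → ℝ :=
    fun s => max (G s) 0 * (1 - w s * (if 0 ≤ z s - y s then (1:ℝ) else 0)) with hF
  -- F is nonnegative
  have hFnn : ∀ s, 0 ≤ F s := by
    intro s
    apply mul_nonneg (le_max_right _ _)
    have h1 : w s * (if 0 ≤ z s - y s then (1:ℝ) else 0) ≤ 1 := by
      rcases hw01 s with ⟨h0, h1⟩
      split_ifs with h
      · simpa using h1
      · simpa using (by norm_num : (0:ℝ) ≤ 1)
    linarith
  -- interval integrability on subintervals of [0,T]
  have hsubF : ∀ a ∈ Icc (0:ℝ) T, ∀ b ∈ Icc (0:ℝ) T, IntervalIntegrable F volume a b := by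
    intro a ha b hb
    apply IntegrableOn.intervalIntegrable
    apply hint.mono_set
    exact uIcc_subset_Icc ha hb
  have hsubG : ∀ a ∈ Icc (0:ℝ) T, ∀ b ∈ Icc (0:ℝ) T, IntervalIntegrable G volume a b := by
    intro a ha b hb
    apply IntegrableOn.intervalIntegrable
    apply hG.mono_set
    exact uIcc_subset_Icc ha hb
  have hsubGp : ∀ a ∈ Icc (0:ℝ) T, ∀ b ∈ Icc (0:ℝ) T,
      IntervalIntegrable (fun s => max (G s) 0) volume a b := by
    intro a ha b hb
    apply IntegrableOn.intervalIntegrable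
    apply IntegrableOn.mono_set _ (uIcc_subset_Icc ha hb)
    exact hG.pos_part
  have h0T : (0:ℝ) ∈ Icc (0:ℝ) T := ⟨le_rfl, hT.le⟩
  -- difference formula for z
  have hzdiff : ∀ a ∈ Icc (0:ℝ) T, ∀ b ∈ Icc (0:ℝ) T,
      z b - z a = ∫ s in a..b, F s := by
    intro a ha b hb
    rw [hz b hb, hz a ha]
    have := intervalIntegral.integral_interval_sub_left (hsubF 0 h0T b hb) (hsubF 0 h0T a ha)
    rw [← this]; ring
  have hydiff : ∀ a ∈ Icc (0:ℝ) T, ∀ b ∈ Icc (0:ℝ) T,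
      y b - y a = ∫ s in a..b, G s := by
    intro a ha b hb
    rw [hy b hb, hy a ha]
    have := intervalIntegral.integral_interval_sub_left (hsubG 0 h0T b hb) (hsubG 0 h0T a ha)
    rw [← this]; ring
  -- monotonicity
  have hmono : MonotoneOn z (Icc 0 T) := by
    intro a ha b hb hab
    have h := hzdiff a ha b hb
    have hnn : 0 ≤ ∫ s in a..b, F s :=
      intervalIntegral.integral_nonneg hab (fun u _ => hFnn u)
    linarith
  -- continuity of z and y on [0,T]
  have huIcc : uIcc (0:ℝ) T = Icc 0 T := uIcc_of_le hT.le
  have hzc : ContinuousOn z (Icc 0 T) := by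
    have : ContinuousOn (fun t => y 0 + ∫ s in (0:ℝ)..t, F s) (Icc 0 T) := by
      apply ContinuousOn.add continuousOn_const
      have := intervalIntegral.continuousOn_primitive_interval (μ := volume) (a := (0:ℝ))
        (b := T) (f := F) (by rw [huIcc]; exact hint)
      rwa [huIcc] at this
    exact this.congr (fun t ht => hz t ht)
  have hyc : ContinuousOn y (Icc 0 T) := by
    have : ContinuousOn (fun t => y 0 + ∫ s in (0:ℝ)..t, G s) (Icc 0 T) := by
      apply ContinuousOn.add continuousOn_const
      have := intervalIntegral.continuousOn_primitive_interval (μ := volume) (a := (0:ℝ))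
        (b := T) (f := G) (by rw [huIcc]; exact hG)
      rwa [huIcc] at this
    exact this.congr (fun t ht => hy t ht)
  -- z dominates y
  have hdom : ∀ t ∈ Icc 0 T, z t ≥ y t := by
    intro t ht
    by_contra hlt
    push_neg at hlt
    -- set of points in [0,t] where z ≥ y
    set S : Set ℝ := {s | s ∈ Icc 0 t ∧ y s ≤ z s} with hS
    have hIccsub : Icc (0:ℝ) t ⊆ Icc 0 T := Icc_subset_Icc le_rfl ht.2
    have hz0 : z 0 = y 0 := by
      have := hz 0 h0T
      simpa using this
    have h0S : (0:ℝ) ∈ S := ⟨⟨le_rfl, ht.1⟩, le_of_eq hz0.symm⟩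
    have hSne : S.Nonempty := ⟨0, h0S⟩
    have hSbdd : BddAbove S := ⟨t, fun s hs => hs.1.2⟩
    have hSclosed : IsClosed S := by
      have hc : ContinuousOn (fun s => z s - y s) (Icc 0 t) :=
        (hzc.mono hIccsub).sub (hyc.mono hIccsub)
      have : S = Icc 0 t ∩ (fun s => z s - y s) ⁻¹' Ici 0 := by
        ext s
        simp only [hS, mem_setOf_eq, mem_inter_iff, mem_preimage, mem_Ici, sub_nonneg]
      rw [this]
      exact hc.preimage_isClosed_of_isClosed isClosed_Icc isClosed_Ici
    set τ := sSup S with hτ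
    have hτS : τ ∈ S := hSclosed.csSup_mem hSne hSbdd
    have hτt : τ ≤ t := hτS.1.2
    have hτT : τ ∈ Icc 0 T := hIccsub hτS.1
    have htT : t ∈ Icc 0 T := ht
    have hτlt : τ < t := lt_of_le_of_ne hτt (by
      intro heq
      have h2 := hτS.2
      rw [heq] at h2
      exact absurd h2 (not_le.mpr hlt))
    -- on (τ, t], z < y, so F = max G 0
    have hFeq : ∀ s ∈ Ioc τ t, F s = max (G s) 0 := by
      intro s hs
      have hsnot : s ∉ S := fun hmem => not_lt.mpr (le_csSup hSbdd hmem) hs.1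
      have hslt : z s - y s < 0 := by
        by_contra hge
        push_neg at hge
        exact hsnot ⟨⟨le_trans hτS.1.1 hs.1.le, hs.2⟩, by linarith⟩
      have hif : (if 0 ≤ z s - y s then (1:ℝ) else 0) = 0 := if_neg (not_le.mpr hslt)
      simp only [hF, hif, mul_zero, sub_zero, mul_one]
    have hFG : (∫ s in τ..t, F s) = ∫ s in τ..t, max (G s) 0 := by
      apply intervalIntegral.integral_congr_ae
      apply MeasureTheory.ae_of_all
      intro s hs
      rw [uIoc_of_le hτlt.le] at hs
      exact hFeq s hs
    have hGle : (∫ s in τ..t, G s) ≤ ∫ s in τ..t, max (G s) 0 :=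
      intervalIntegral.integral_mono_on hτlt.le (hsubG τ hτT t htT) (hsubGp τ hτT t htT)
        (fun u _ => le_max_left _ _)
    have h1 := hzdiff τ hτT t htT
    have h2 := hydiff τ hτT t htT
    have h3 : y τ ≤ z τ := hτS.2
    -- z t - z τ = ∫F = ∫max G 0 ≥ ∫G = y t - y τ
    have : y t - y τ ≤ z t - z τ := by rw [h1, h2, hFG]; exact hGle
    linarith
  refine ⟨hmono, hdom, ?_⟩
  apply csSup_le (by exact ⟨y 0, 0, h0T, rfl⟩)
  rintro v ⟨s, hs, rfl⟩
  calc y s ≤ z s := hdom s hs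
    _ ≤ z T := hmono hs ⟨hT.le, le_rfl⟩ hs.2
end

section
/- Let T > 0, let U ⊆ ℝᵖ be a nonempty compact set, and let f : ℝⁿ × ℝ × ℝᵖ → ℝⁿ and g : ℝⁿ × ℝ × ℝᵖ → ℝ be continuously differentiable functions satisfying the linear growth condition ‖f(x,y,u)‖ + |g(x,y,u)| ≤ C(1 + ‖x‖ + |y|) for some C > 0 and all (x,y) and u ∈ U. Fix (x₀,y₀). For a measurable control u : [0,T] → U, let (x,y) denote the absolutely continuous solution of ẋ = f(x,y,u(t)), ẏ = g(x,y,u(t)) with (x(0),y(0)) = (x₀,y₀). Then the infimum over measurable u of sup_{t ∈ [0,T]} y(t) equals the infimum, over measurable controls (u,v) with v : [0,T] → [0,1] and over the corresponding absolutely continuous solutions (x,y,z) of the extended system ẋ = f(x,y,u(t)), ẏ = g(x,y,u(t)), ż = max(g(x,y,u(t)),0)(1 − v(t)) with (x(0),y(0),z(0)) = (x₀,y₀,y₀) that satisfy the state constraint z(t) ≥ y(t) for all t ∈ [0,T], of the terminal value z(T). -/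
open MeasureTheory Set intervalIntegral
open scoped ENNReal

lemma runmax_rep (T : ℝ) (hT : 0 < T) (y G : ℝ → ℝ) (hy : Continuous y)
    (hGm : Measurable G) (hGi : IntegrableOn G (Icc 0 T))
    (hyint : ∀ t ∈ Icc 0 T, y t = y 0 + ∫ s in (0:ℝ)..t, G s) :
    ∃ (v z : ℝ → ℝ), Measurable v ∧ (∀ t, v t ∈ Icc (0:ℝ) 1) ∧ Continuous z ∧
      z 0 = y 0 ∧
      (∀ t ∈ Icc 0 T, z t = y 0 + ∫ s in (0:ℝ)..t, max (G s) 0 * (1 - v s)) ∧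
      (∀ t ∈ Icc 0 T, y t ≤ z t) ∧ z T = sSup (y '' Icc 0 T) := by
  classical
  set H : ℝ → ℝ := (Icc (0:ℝ) T).indicator (fun s => max (G s) 0) with hHdef
  have hHm : Measurable H := (hGm.max measurable_const).indicator measurableSet_Icc
  have hHnn : ∀ s, 0 ≤ H s := fun s =>
    Set.indicator_nonneg (fun s _ => le_max_right _ _) s
  have hHi : Integrable H :=
    (IntegrableOn.integrable_indicator hGi.pos_part measurableSet_Icc)
  have hHeq : ∀ s ∈ Icc (0:ℝ) T, H s = max (G s) 0 := fun s hs =>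
    Set.indicator_of_mem hs _
  -- the clamp and running max
  set c : ℝ → ℝ := fun t => max 0 (min t T) with hcdef
  have hc_mem : ∀ t, c t ∈ Icc (0:ℝ) T := fun t =>
    ⟨le_max_left _ _, max_le (by linarith) (min_le_right _ _)⟩
  have hc_mono : Monotone c := fun a b hab =>
    max_le_max le_rfl (min_le_min_right _ hab)
  have hc_id : ∀ t ∈ Icc (0:ℝ) T, c t = t := fun t ht => by
    simp [hcdef, min_eq_left ht.2, max_eq_right ht.1]
  set M : ℝ → ℝ := fun t => sSup (y '' Icc 0 (c t)) with hMdef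
  have hbdd : ∀ t, BddAbove (y '' Icc 0 (c t)) := fun t =>
    (isCompact_Icc.image hy).bddAbove
  have hne : ∀ t, (y '' Icc 0 (c t)).Nonempty := fun t =>
    ⟨y 0, mem_image_of_mem _ ⟨le_rfl, (hc_mem t).1⟩⟩
  have hMmono : Monotone M := fun a b hab =>
    csSup_le_csSup (hbdd b) (hne a) (image_mono (Icc_subset_Icc_right (hc_mono hab)))
  have hM0 : M 0 = y 0 := by
    have : c 0 = 0 := hc_id 0 ⟨le_rfl, hT.le⟩
    simp [hMdef, this, Icc_self]
  have hMT : M T = sSup (y '' Icc 0 T) := by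
    have : c T = T := hc_id T ⟨hT.le, le_rfl⟩
    simp [hMdef, this]
  have hyleM : ∀ t ∈ Icc (0:ℝ) T, y t ≤ M t := fun t ht =>
    le_csSup (hbdd t) (mem_image_of_mem _ ⟨ht.1, (hc_id t ht).symm ▸ le_rfl⟩)
  -- the primitive of H
  set N : ℝ → ℝ := fun t => ∫ s in (0:ℝ)..t, H s with hNdef
  have hNcont : Continuous N := hHi.continuous_primitive 0
  have hNsub : ∀ a b : ℝ, N b - N a = ∫ s in a..b, H s := fun a b =>
    integral_interval_sub_left hHi.intervalIntegrable hHi.intervalIntegrable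
  have hNIoc : ∀ a b : ℝ, a ≤ b → N b - N a = ∫ s in Ioc a b, H s := fun a b hab => by
    rw [hNsub, intervalIntegral.integral_of_le hab]
  have hIocnn : ∀ a b : ℝ, 0 ≤ ∫ s in Ioc a b, H s := fun a b =>
    setIntegral_nonneg measurableSet_Ioc fun s _ => hHnn s
  have hNmono : Monotone N := fun a b hab => by
    have := hIocnn a b; have := hNIoc a b hab; linarith
  -- the key inequality
  have hkey : ∀ a b : ℝ, a ≤ b → M b ≤ M a + (N b - N a) := by
    intro a b hab
    rw [hNIoc a b hab]
    refine csSup_le (hne b) ?_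
    rintro w ⟨t, ht, rfl⟩
    have hI0 : 0 ≤ ∫ s in Ioc a b, H s := hIocnn a b
    by_cases hta : t ≤ c a
    · have : y t ≤ M a := le_csSup (hbdd a) (mem_image_of_mem _ ⟨ht.1, hta⟩)
      linarith
    · push_neg at hta
      have htT : t ∈ Icc (0:ℝ) T := ⟨ht.1, le_trans ht.2 (hc_mem b).2⟩
      have hcaT : c a ∈ Icc (0:ℝ) T := hc_mem a
      have hya : y (c a) ≤ M a :=
        le_csSup (hbdd a) (mem_image_of_mem _ ⟨(hc_mem a).1, le_rfl⟩)
      have hGint : ∀ t' ∈ Icc (0:ℝ) T, IntervalIntegrable G volume 0 t' := by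
        intro t' ht'
        apply (hGi.mono_set _).intervalIntegrable
        rw [uIcc_of_le ht'.1]
        exact Icc_subset_Icc_right ht'.2
      have hsub : y t - y (c a) = ∫ s in (c a)..t, G s := by
        rw [hyint t htT, hyint (c a) hcaT]
        have := integral_interval_sub_left (hGint t htT) (hGint (c a) hcaT)
        linarith [this]
      have hint2 : IntervalIntegrable G volume (c a) t := by
        apply (hGi.mono_set _).intervalIntegrable
        rw [uIcc_of_le hta.le]
        exact Icc_subset_Icc hcaT.1 htT.2
      have hmono1 : (∫ s in (c a)..t, G s) ≤ ∫ s in (c a)..t, H s := by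
        refine intervalIntegral.integral_mono_on hta.le hint2 hHi.intervalIntegrable ?_
        intro s hs
        rw [hHeq s ⟨le_trans hcaT.1 hs.1, le_trans hs.2 htT.2⟩]
        exact le_max_left _ _
      have hsubset : Ioc (c a) t ⊆ Ioc a b := by
        intro s hs
        constructor
        · by_cases haT : a ≤ T
          · have : a ≤ c a := le_max_of_le_right (le_min le_rfl haT)
            linarith [hs.1]
          · push_neg at haT
            exfalso
            have hca : c a = T := by
              simp [hcdef, min_eq_right haT.le, max_eq_right hT.le]
            have : c b ≤ T := (hc_mem b).2
            have := ht.2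
            linarith
        · by_cases hb0 : 0 ≤ b
          · have : c b ≤ b := max_le hb0 (min_le_left _ _)
            linarith [hs.2, ht.2]
          · push_neg at hb0
            exfalso
            have hcb : c b = 0 := by
              simp [hcdef, min_eq_left (by linarith : b ≤ T), max_eq_left hb0.le]
            have := ht.2
            have := (hc_mem a).1
            linarith
      have hmono2 : (∫ s in (c a)..t, H s) ≤ ∫ s in Ioc a b, H s := by
        rw [intervalIntegral.integral_of_le hta.le]
        refine setIntegral_mono_set hHi.integrableOn ?_ hsubset.eventuallyLE
        exact ae_of_all _ fun s => hHnn s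
      linarith
  -- right continuity of M
  have hMrc : ∀ a : ℝ, ContinuousWithinAt M (Ici a) a := by
    intro a
    have hupper : Filter.Tendsto (fun b => M a + (N b - N a)) (nhdsWithin a (Ici a)) (nhds (M a)) := by
      have : Filter.Tendsto (fun b => M a + (N b - N a)) (nhds a) (nhds (M a + (N a - N a))) := by
        exact (tendsto_const_nhds.add ((hNcont.tendsto a).sub tendsto_const_nhds))
      simpa using this.mono_left nhdsWithin_le_nhds
    have hlower : Filter.Tendsto (fun _ : ℝ => M a) (nhdsWithin a (Ici a)) (nhds (M a)) :=
      tendsto_const_nhds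
    refine tendsto_of_tendsto_of_tendsto_of_le_of_le' hlower hupper ?_ ?_
    · exact Filter.eventually_of_mem self_mem_nhdsWithin fun b hb => hMmono hb
    · exact Filter.eventually_of_mem self_mem_nhdsWithin fun b hb => hkey a b hb
  -- Stieltjes functions
  set SM : StieltjesFunction ℝ := ⟨M, hMmono, hMrc⟩ with hSM
  set SD : StieltjesFunction ℝ :=
    ⟨fun t => N t - M t,
     fun a b hab => by have := hkey a b hab; simp only; linarith,
     fun a => (hNcont.continuousWithinAt).sub (hMrc a)⟩ with hSD
  set Hh : ℝ → ℝ≥0∞ := fun s => ENNReal.ofReal (H s) with hHh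
  have hHhm : Measurable Hh := hHm.ennreal_ofReal
  set ν : Measure ℝ := volume.withDensity Hh with hν
  have hsum : (SM + SD).measure = ν := by
    refine Measure.ext_of_Ioc _ _ fun a b hab => ?_
    rw [StieltjesFunction.measure_Ioc, hν, withDensity_apply _ measurableSet_Ioc]
    have h1 : ((SM + SD) b : ℝ) - ((SM + SD) a : ℝ) = N b - N a := by
      show (M b + (N b - M b)) - (M a + (N a - M a)) = N b - N a
      ring
    rw [h1, hNIoc a b hab.le]
    exact (ofReal_integral_eq_lintegral_ofReal hHi.integrableOn
      (ae_of_all _ fun s => hHnn s))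
  have hMle : SM.measure ≤ ν := by
    rw [← hsum, StieltjesFunction.measure_add]
    exact Measure.le_add_right le_rfl
  have hac : SM.measure ≪ volume :=
    (Measure.absolutelyContinuous_of_le hMle).trans (withDensity_absolutelyContinuous _ _)
  set ρ : ℝ → ℝ≥0∞ := SM.measure.rnDeriv volume with hρ
  have hρm : Measurable ρ := Measure.measurable_rnDeriv _ _
  have hρd : volume.withDensity ρ = SM.measure := Measure.withDensity_rnDeriv_eq _ _ hac
  have hρle : ρ ≤ᵐ[volume] Hh := by
    refine ae_le_of_forall_setLIntegral_le_of_sigmaFinite hρm fun s hs _ => ?_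
    have h1 : ∫⁻ x in s, ρ x = SM.measure s := by
      rw [← hρd, withDensity_apply _ hs]
    have h2 : ∫⁻ x in s, Hh x = ν s := by rw [hν, withDensity_apply _ hs]
    rw [h1, h2]
    exact hMle s
  have hρfin : ∀ᵐ x, ρ x < ⊤ :=
    hρle.mono fun x hx => lt_of_le_of_lt hx ENNReal.ofReal_lt_top
  set ρ₂ : ℝ → ℝ := fun s => min ((ρ s).toReal) (H s) with hρ₂
  have hρ₂m : Measurable ρ₂ := (hρm.ennreal_toReal).min hHm
  have hρ₂ae : ρ₂ =ᵐ[volume] fun s => (ρ s).toReal := by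
    filter_upwards [hρle] with s hs
    have hfin : ρ s ≠ ⊤ := ne_top_of_le_ne_top ENNReal.ofReal_ne_top hs
    have : (ρ s).toReal ≤ H s := by
      have := ENNReal.toReal_mono ENNReal.ofReal_ne_top hs
      rwa [ENNReal.toReal_ofReal (hHnn s)] at this
    exact min_eq_left this
  -- the control v
  set v : ℝ → ℝ := fun s => if H s = 0 then 0 else 1 - ρ₂ s / H s with hvdef
  have hvm : Measurable v := by
    refine Measurable.ite (hHm (measurableSet_singleton 0)) measurable_const ?_
    exact measurable_const.sub (hρ₂m.div hHm)
  have hρ₂nn : ∀ s, 0 ≤ ρ₂ s := fun s => le_min ENNReal.toReal_nonneg (hHnn s)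
  have hρ₂leH : ∀ s, ρ₂ s ≤ H s := fun s => min_le_right _ _
  have hv01 : ∀ s, v s ∈ Icc (0:ℝ) 1 := by
    intro s
    by_cases h0 : H s = 0
    · simp [hvdef, h0]
    · have hpos : 0 < H s := lt_of_le_of_ne (hHnn s) (Ne.symm h0)
      have h1 : 0 ≤ ρ₂ s / H s := div_nonneg (hρ₂nn s) hpos.le
      have h2 : ρ₂ s / H s ≤ 1 := (div_le_one hpos).mpr (hρ₂leH s)
      simp only [hvdef, if_neg h0]
      constructor <;> [linarith; linarith]
  have hpt : ∀ s, H s * (1 - v s) = ρ₂ s := by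
    intro s
    by_cases h0 : H s = 0
    · have : ρ₂ s = 0 := le_antisymm (h0 ▸ hρ₂leH s) (hρ₂nn s)
      simp [hvdef, h0, this]
    · simp only [hvdef, if_neg h0]
      field_simp
      ring
  -- the function z
  have hintm : Measurable (fun s => H s * (1 - v s)) :=
    hHm.mul (measurable_const.sub hvm)
  have hinti : Integrable (fun s => H s * (1 - v s)) := by
    refine hHi.mono' hintm.aestronglyMeasurable (ae_of_all _ fun s => ?_)
    have h1 : 0 ≤ 1 - v s := by have := (hv01 s).2; linarith
    have h2 : 1 - v s ≤ 1 := by have := (hv01 s).1; linarith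
    rw [Real.norm_eq_abs, abs_of_nonneg (mul_nonneg (hHnn s) h1)]
    calc H s * (1 - v s) ≤ H s * 1 := mul_le_mul_of_nonneg_left h2 (hHnn s)
    _ = H s := mul_one _
  set z : ℝ → ℝ := fun t => y 0 + ∫ s in (0:ℝ)..t, H s * (1 - v s) with hzdef
  have hzcont : Continuous z := continuous_const.add (hinti.continuous_primitive 0)
  have hz0 : z 0 = y 0 := by simp [hzdef]
  -- z equals M on [0,T]
  have hzM : ∀ t ∈ Icc (0:ℝ) T, z t = M t := by
    intro t ht
    have e1 : (∫ s in (0:ℝ)..t, H s * (1 - v s)) = ∫ s in (0:ℝ)..t, ρ₂ s := by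
      congr 1; funext s; exact hpt s
    have e2 : (∫ s in (0:ℝ)..t, ρ₂ s) = ∫ s in Ioc (0:ℝ) t, (ρ s).toReal := by
      rw [intervalIntegral.integral_of_le ht.1]
      exact setIntegral_congr_ae measurableSet_Ioc (hρ₂ae.mono fun s hs _ => hs)
    have e3 : (∫ s in Ioc (0:ℝ) t, (ρ s).toReal) = (SM.measure (Ioc 0 t)).toReal := by
      rw [← hρd, withDensity_apply _ measurableSet_Ioc]
      exact integral_toReal (hρm.aemeasurable.restrict) (ae_restrict_of_ae hρfin)
    have e4 : SM.measure (Ioc 0 t) = ENNReal.ofReal (M t - M 0) :=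
      SM.measure_Ioc 0 t
    have e5 : (SM.measure (Ioc 0 t)).toReal = M t - M 0 := by
      rw [e4, ENNReal.toReal_ofReal (by have := hMmono ht.1; linarith)]
    rw [hzdef]
    simp only
    rw [e1, e2, e3, e5, hM0]
    ring
  refine ⟨v, z, hvm, hv01, hzcont, hz0, ?_, ?_, ?_⟩
  · intro t ht
    rw [hzdef]
    simp only
    congr 1
    refine intervalIntegral.integral_congr fun s hs => ?_
    rw [uIcc_of_le ht.1] at hs
    rw [hHeq s ⟨hs.1, le_trans hs.2 ht.2⟩]
  · intro t ht
    rw [hzM t ht]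
    exact hyleM t ht
  · rw [hzM T ⟨hT.le, le_rfl⟩, hMT]


set_option synthInstance.maxHeartbeats 1000000

/-- Propositions 1 and 2 of the paper: the optimal value of the
peak-minimization problem `P` (minimize `sup_{[0,T]} y` over measurable controls
`u` valued in the compact set `U`) equals the optimal value of the extended
Mayer problem `P₁` (minimize `z(T)` over measurable controls `(u,v)` with `v`
valued in `[0,1]`, for the extended dynamics
`ẋ = f, ẏ = g, ż = max(g,0)(1-v)` with `z(0) = y(0) = y₀`, under the state
constraint `z ≥ y` on `[0,T]`). Solutions are absolutely continuous (here:
continuous and given in integral form). -/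
theorem stmt5 (n p : ℕ) (T : ℝ) (hT : 0 < T)
    (U : Set (EuclideanSpace ℝ (Fin p))) (hUne : U.Nonempty) (hUcomp : IsCompact U)
    (f : EuclideanSpace ℝ (Fin n) × ℝ × EuclideanSpace ℝ (Fin p) → EuclideanSpace ℝ (Fin n))
    (g : EuclideanSpace ℝ (Fin n) × ℝ × EuclideanSpace ℝ (Fin p) → ℝ)
    (hf : ContDiff ℝ 1 f) (hg : ContDiff ℝ 1 g)
    (C : ℝ) (hC : 0 < C)
    (hgrowth : ∀ x y u, u ∈ U → ‖f (x, y, u)‖ + |g (x, y, u)| ≤ C * (1 + ‖x‖ + |y|))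
    (x₀ : EuclideanSpace ℝ (Fin n)) (y₀ : ℝ) :
    sInf {r : ℝ |
      ∃ (u : ℝ → EuclideanSpace ℝ (Fin p)) (x : ℝ → EuclideanSpace ℝ (Fin n)) (y : ℝ → ℝ),
        Measurable u ∧ (∀ t, u t ∈ U) ∧ Continuous x ∧ Continuous y ∧
        x 0 = x₀ ∧ y 0 = y₀ ∧
        (∀ t ∈ Icc 0 T, x t = x₀ + ∫ s in (0:ℝ)..t, f (x s, y s, u s)) ∧
        (∀ t ∈ Icc 0 T, y t = y₀ + ∫ s in (0:ℝ)..t, g (x s, y s, u s)) ∧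
        r = sSup (y '' Icc 0 T)} =
    sInf {r : ℝ |
      ∃ (u : ℝ → EuclideanSpace ℝ (Fin p)) (v : ℝ → ℝ)
        (x : ℝ → EuclideanSpace ℝ (Fin n)) (y z : ℝ → ℝ),
        Measurable u ∧ (∀ t, u t ∈ U) ∧ Measurable v ∧ (∀ t, v t ∈ Icc (0:ℝ) 1) ∧
        Continuous x ∧ Continuous y ∧ Continuous z ∧
        x 0 = x₀ ∧ y 0 = y₀ ∧ z 0 = y₀ ∧
        (∀ t ∈ Icc 0 T, x t = x₀ + ∫ s in (0:ℝ)..t, f (x s, y s, u s)) ∧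
        (∀ t ∈ Icc 0 T, y t = y₀ + ∫ s in (0:ℝ)..t, g (x s, y s, u s)) ∧
        (∀ t ∈ Icc 0 T, z t = y₀ + ∫ s in (0:ℝ)..t, max (g (x s, y s, u s)) 0 * (1 - v s)) ∧
        (∀ t ∈ Icc 0 T, z t ≥ y t) ∧
        r = z T} := by
  classical
  set A : Set ℝ := {r : ℝ |
      ∃ (u : ℝ → EuclideanSpace ℝ (Fin p)) (x : ℝ → EuclideanSpace ℝ (Fin n)) (y : ℝ → ℝ),
        Measurable u ∧ (∀ t, u t ∈ U) ∧ Continuous x ∧ Continuous y ∧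
        x 0 = x₀ ∧ y 0 = y₀ ∧
        (∀ t ∈ Icc 0 T, x t = x₀ + ∫ s in (0:ℝ)..t, f (x s, y s, u s)) ∧
        (∀ t ∈ Icc 0 T, y t = y₀ + ∫ s in (0:ℝ)..t, g (x s, y s, u s)) ∧
        r = sSup (y '' Icc 0 T)} with hA
  set B : Set ℝ := {r : ℝ |
      ∃ (u : ℝ → EuclideanSpace ℝ (Fin p)) (v : ℝ → ℝ)
        (x : ℝ → EuclideanSpace ℝ (Fin n)) (y z : ℝ → ℝ),
        Measurable u ∧ (∀ t, u t ∈ U) ∧ Measurable v ∧ (∀ t, v t ∈ Icc (0:ℝ) 1) ∧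
        Continuous x ∧ Continuous y ∧ Continuous z ∧
        x 0 = x₀ ∧ y 0 = y₀ ∧ z 0 = y₀ ∧
        (∀ t ∈ Icc 0 T, x t = x₀ + ∫ s in (0:ℝ)..t, f (x s, y s, u s)) ∧
        (∀ t ∈ Icc 0 T, y t = y₀ + ∫ s in (0:ℝ)..t, g (x s, y s, u s)) ∧
        (∀ t ∈ Icc 0 T, z t = y₀ + ∫ s in (0:ℝ)..t, max (g (x s, y s, u s)) 0 * (1 - v s)) ∧
        (∀ t ∈ Icc 0 T, z t ≥ y t) ∧
        r = z T} with hB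
  -- integrability of the dynamics along admissible trajectories
  have key_int : ∀ (u : ℝ → EuclideanSpace ℝ (Fin p)) (x : ℝ → EuclideanSpace ℝ (Fin n))
      (y : ℝ → ℝ), Measurable u → (∀ t, u t ∈ U) → Continuous x → Continuous y →
      Measurable (fun s => g (x s, y s, u s)) ∧
        IntegrableOn (fun s => g (x s, y s, u s)) (Icc 0 T) := by
    intro u x y hu huU hx hy
    have hgc : Continuous g := hg.continuous
    have hGm : Measurable (fun s => g (x s, y s, u s)) :=
      hgc.measurable.comp (hx.measurable.prodMk (hy.measurable.prodMk hu))
    refine ⟨hGm, ?_⟩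
    obtain ⟨Kx, hKx⟩ := isCompact_Icc.exists_bound_of_continuousOn hx.continuousOn
    obtain ⟨Ky, hKy⟩ := isCompact_Icc.exists_bound_of_continuousOn hy.continuousOn
    have hbound : ∀ s ∈ Icc (0:ℝ) T, ‖g (x s, y s, u s)‖ ≤ C * (1 + Kx + Ky) := by
      intro s hs
      have h1 := hgrowth (x s) (y s) (u s) (huU s)
      have h2 := hKx s hs
      have h3 := hKy s hs
      rw [Real.norm_eq_abs] at h3 ⊢
      have h4 : ‖f (x s, y s, u s)‖ ≥ 0 := norm_nonneg _
      have h5 : C * (1 + ‖x s‖ + |y s|) ≤ C * (1 + Kx + Ky) := by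
        apply mul_le_mul_of_nonneg_left _ hC.le
        linarith
      linarith
    refine Integrable.mono' (g := fun _ => C * (1 + Kx + Ky))
      (integrableOn_const measure_Icc_lt_top.ne) hGm.aestronglyMeasurable ?_
    exact (ae_restrict_iff' measurableSet_Icc).mpr (ae_of_all _ hbound)
  -- direction B → A : from any admissible extended trajectory, the running sup is below z T
  have h21 : ∀ r ∈ B, ∃ r' ∈ A, r' ≤ r := by
    intro r hr
    rw [hB] at hr
    obtain ⟨u, v, x, y, z, hu, huU, hvm, hv01, hx, hy, hz, hx0, hy0, hz0, hxint, hyint,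
      hzint, hzy, hrz⟩ := hr
    obtain ⟨hGm, hGi⟩ := key_int u x y hu huU hx hy
    refine ⟨sSup (y '' Icc 0 T), ?_, ?_⟩
    · rw [hA]
      exact ⟨u, x, y, hu, huU, hx, hy, hx0, hy0, hxint, hyint, rfl⟩
    · -- sSup (y '' Icc 0 T) ≤ z T
      set h : ℝ → ℝ := fun s => max (g (x s, y s, u s)) 0 * (1 - v s) with hhdef
      have hhm : Measurable h := (hGm.max measurable_const).mul (measurable_const.sub hvm)
      have hhi : IntegrableOn h (Icc 0 T) := by
        refine Integrable.mono' hGi.abs hhm.aestronglyMeasurable (ae_of_all _ fun s => ?_)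
        have h1 : 0 ≤ 1 - v s := by have := (hv01 s).2; linarith
        have h2 : 1 - v s ≤ 1 := by have := (hv01 s).1; linarith
        have h3 : max (g (x s, y s, u s)) 0 ≤ |g (x s, y s, u s)| :=
          max_le (le_abs_self _) (abs_nonneg _)
        rw [Real.norm_eq_abs, abs_of_nonneg (mul_nonneg (le_max_right _ _) h1)]
        calc max (g (x s, y s, u s)) 0 * (1 - v s)
            ≤ |g (x s, y s, u s)| * 1 :=
              mul_le_mul h3 h2 h1 (abs_nonneg _)
          _ = |g (x s, y s, u s)| := mul_one _
      have hzmono : ∀ t ∈ Icc (0:ℝ) T, z t ≤ z T := by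
        intro t ht
        have hint1 : IntervalIntegrable h volume 0 t := by
          apply (hhi.mono_set _).intervalIntegrable
          rw [uIcc_of_le ht.1]; exact Icc_subset_Icc_right ht.2
        have hint2 : IntervalIntegrable h volume 0 T := by
          apply (hhi.mono_set _).intervalIntegrable
          rw [uIcc_of_le hT.le]
        have hsub : (∫ s in (0:ℝ)..T, h s) - ∫ s in (0:ℝ)..t, h s = ∫ s in t..T, h s :=
          integral_interval_sub_left hint2 hint1
        have hnn : 0 ≤ ∫ s in t..T, h s := by
          refine intervalIntegral.integral_nonneg ht.2 fun s _ => ?_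
          have := (hv01 s).2
          exact mul_nonneg (le_max_right _ _) (by linarith)
        have e1 := hzint t ht
        have e2 := hzint T ⟨hT.le, le_rfl⟩
        rw [hhdef] at hsub
        simp only at hsub
        linarith
      refine csSup_le ⟨y 0, mem_image_of_mem _ ⟨le_rfl, hT.le⟩⟩ ?_
      rintro w ⟨t, ht, rfl⟩
      calc y t ≤ z t := hzy t ht
        _ ≤ z T := hzmono t ht
        _ = r := hrz.symm
  -- direction A → B : running max construction
  have h12 : ∀ r ∈ A, ∃ r' ∈ B, r' ≤ r := by
    intro r hr
    rw [hA] at hr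
    obtain ⟨u, x, y, hu, huU, hx, hy, hx0, hy0, hxint, hyint, hrs⟩ := hr
    obtain ⟨hGm, hGi⟩ := key_int u x y hu huU hx hy
    obtain ⟨v, z, hvm, hv01, hzc, hz0, hzint, hzy, hzT⟩ :=
      runmax_rep T hT y (fun s => g (x s, y s, u s)) hy hGm hGi
        (fun t ht => by rw [hy0]; exact hyint t ht)
    refine ⟨z T, ?_, ?_⟩
    · rw [hB]
      refine ⟨u, v, x, y, z, hu, huU, hvm, hv01, hx, hy, hzc, hx0, hy0, ?_, hxint, hyint,
        ?_, fun t ht => hzy t ht, rfl⟩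
      · rw [hz0, hy0]
      · intro t ht
        rw [hzint t ht, hy0]
    · exact le_of_eq (hzT.trans hrs.symm)
  -- lower bounds
  have hAlb : ∀ r ∈ A, y₀ ≤ r := by
    intro r hr
    rw [hA] at hr
    obtain ⟨u, x, y, hu, huU, hx, hy, hx0, hy0, hxint, hyint, hrs⟩ := hr
    rw [hrs, ← hy0]
    exact le_csSup (isCompact_Icc.image hy).bddAbove (mem_image_of_mem _ ⟨le_rfl, hT.le⟩)
  have hBlb : ∀ r ∈ B, y₀ ≤ r := by
    intro r hr
    obtain ⟨r', hr', hle⟩ := h21 r hr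
    exact (hAlb r' hr').trans hle
  -- conclusion
  by_cases hAne : A.Nonempty
  · obtain ⟨a, ha⟩ := hAne
    obtain ⟨b, hb, hba⟩ := h12 a ha
    have hBne : B.Nonempty := ⟨b, hb⟩
    have bddA : BddBelow A := ⟨y₀, fun r hr => hAlb r hr⟩
    have bddB : BddBelow B := ⟨y₀, fun r hr => hBlb r hr⟩
    apply le_antisymm
    · refine le_csInf hBne fun b' hb' => ?_
      obtain ⟨a', ha', hab⟩ := h21 b' hb'
      exact (csInf_le bddA ha').trans hab
    · refine le_csInf ⟨a, ha⟩ fun a' ha' => ?_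
      obtain ⟨b', hb', hba'⟩ := h12 a' ha'
      exact (csInf_le bddB hb').trans hba'
  · have hBe : B = ∅ := by
      rw [eq_empty_iff_forall_notMem]
      intro b hb
      obtain ⟨a, ha, _⟩ := h21 b hb
      exact hAne ⟨a, ha⟩
    rw [not_nonempty_iff_eq_empty] at hAne
    rw [hAne, hBe]
end

section
/- Let T > 0, let U ⊆ ℝᵖ be a nonempty compact set, and let f : ℝⁿ × ℝ × ℝᵖ → ℝⁿ and g : ℝⁿ × ℝ × ℝᵖ → ℝ be continuously differentiable with linear growth. Fix (x₀,y₀) and consider absolutely continuous solutions (x,y,z) of the extended system ẋ = f(x,y,u(t)), ẏ = g(x,y,u(t)), ż = max(g(x,y,u(t)),0)(1 − v(t)) with (x(0),y(0),z(0)) = (x₀,y₀,y₀), for measurable controls u : [0,T] → U and v : [0,T] → [0,1]. Then the infimum of z(T) over such solutions satisfying the state constraint C: z(t) ≥ y(t) for all t ∈ [0,T], equals the infimum of z(T) over such solutions satisfying the mixed constraint C_m: max(y(t) − z(t), 0)(1 − v(t)) + z(t) − y(t) ≥ 0 for almost every t ∈ [0,T]. -/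
open MeasureTheory Set

set_option maxHeartbeats 1000000
set_option synthInstance.maxHeartbeats 1000000

/-- Auxiliary lemma: under the mixed constraint, the state constraint `z ≥ y`
holds on all of `[0,T]`. -/
lemma aux_state_from_mixed {T : ℝ} (hT : 0 < T)
    (φ ψ : ℝ → ℝ) (v y z : ℝ → ℝ) (y₀ : ℝ)
    (hφint : IntervalIntegrable φ volume 0 T)
    (hψint : IntervalIntegrable ψ volume 0 T)
    (hv0 : ∀ s, 0 ≤ v s)
    (hψφ : ∀ s, v s = 0 → φ s ≤ ψ s)
    (hy : Continuous y) (hz : Continuous z)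
    (hy0 : y 0 = y₀) (hz0 : z 0 = y₀)
    (hyeq : ∀ t ∈ Icc 0 T, y t = y₀ + ∫ s in (0:ℝ)..t, φ s)
    (hzeq : ∀ t ∈ Icc 0 T, z t = y₀ + ∫ s in (0:ℝ)..t, ψ s)
    (hc : ∀ᵐ t ∂(volume.restrict (Icc 0 T)),
      max (y t - z t) 0 * (1 - v t) + z t - y t ≥ 0) :
    ∀ t ∈ Icc 0 T, z t ≥ y t := by
  intro tstar htstar
  by_contra hcon
  push_neg at hcon
  -- the set of times up to `tstar` where the state constraint holds
  set S : Set ℝ := Icc 0 tstar ∩ {t | y t ≤ z t} with hSdef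
  have hS0 : (0:ℝ) ∈ S := ⟨⟨le_refl 0, htstar.1⟩, by simp [hy0, hz0]⟩
  have hScomp : IsCompact S := isCompact_Icc.inter_right (isClosed_le hy hz)
  obtain ⟨τ, hτS, hτub⟩ : ∃ τ ∈ S, ∀ t ∈ S, t ≤ τ :=
    ⟨sSup S, hScomp.sSup_mem ⟨0, hS0⟩, fun t ht => le_csSup hScomp.bddAbove ht⟩
  have hτ0 : 0 ≤ τ := hτS.1.1
  have hτt : τ ≤ tstar := hτS.1.2
  have hτlt : τ < tstar := lt_of_le_of_ne hτt (by
    rintro rfl; exact absurd hτS.2 (not_le.mpr hcon))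
  have hτT : τ ∈ Icc (0:ℝ) T := ⟨hτ0, hτt.trans htstar.2⟩
  -- on `(τ, tstar]` we have `z < y`
  have hIoc : ∀ t ∈ Ioc τ tstar, z t < y t := by
    intro t ht
    by_contra h
    push_neg at h
    have htS : t ∈ S := ⟨⟨hτ0.trans ht.1.le, ht.2⟩, h⟩
    exact absurd (hτub t htS) (not_le.mpr ht.1)
  -- interval integrability on subintervals
  have hsub0τ : uIcc τ (0:ℝ) ⊆ uIcc (0:ℝ) T := by
    rw [uIcc_comm, uIcc_of_le hτ0, uIcc_of_le hT.le]
    exact Icc_subset_Icc le_rfl hτT.2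
  have hsubτt : uIcc τ tstar ⊆ uIcc (0:ℝ) T := by
    rw [uIcc_of_le hτlt.le, uIcc_of_le hT.le]
    exact Icc_subset_Icc hτ0 htstar.2
  have hφi0 : IntervalIntegrable φ volume 0 τ := (hφint.mono_set hsub0τ).symm
  have hφi : IntervalIntegrable φ volume τ tstar := hφint.mono_set hsubτt
  have hψi0 : IntervalIntegrable ψ volume 0 τ := (hψint.mono_set hsub0τ).symm
  have hψi : IntervalIntegrable ψ volume τ tstar := hψint.mono_set hsubτt
  -- increments as integrals over `(τ, tstar)`
  have hyd : y tstar - y τ = ∫ s in τ..tstar, φ s := by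
    have hadd := intervalIntegral.integral_add_adjacent_intervals hφi0 hφi
    rw [hyeq tstar htstar, hyeq τ hτT]
    linarith [hadd]
  have hzd : z tstar - z τ = ∫ s in τ..tstar, ψ s := by
    have hadd := intervalIntegral.integral_add_adjacent_intervals hψi0 hψi
    rw [hzeq tstar htstar, hzeq τ hτT]
    linarith [hadd]
  -- a.e. comparison of the integrands on `[τ, tstar]`
  have hae : φ ≤ᵐ[volume.restrict (Icc τ tstar)] ψ := by
    have h1 : ∀ᵐ s ∂(volume.restrict (Icc τ tstar)),
        max (y s - z s) 0 * (1 - v s) + z s - y s ≥ 0 :=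
      ae_restrict_of_ae_restrict_of_subset (Icc_subset_Icc hτ0 htstar.2) hc
    have h2 : ∀ᵐ s ∂(volume.restrict (Icc τ tstar)), s ≠ τ := by
      refine ae_restrict_of_ae ?_
      rw [ae_iff]
      have : {a : ℝ | ¬a ≠ τ} = {τ} := by ext a; simp
      rw [this]
      exact measure_singleton τ
    have h3 : ∀ᵐ s ∂(volume.restrict (Icc τ tstar)), s ∈ Icc τ tstar :=
      ae_restrict_mem measurableSet_Icc
    filter_upwards [h1, h2, h3] with s hs1 hs2 hs3
    have hsIoc : s ∈ Ioc τ tstar := ⟨lt_of_le_of_ne hs3.1 (Ne.symm hs2), hs3.2⟩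
    have hw : 0 < y s - z s := by have := hIoc s hsIoc; linarith
    rw [max_eq_left hw.le] at hs1
    have hv : v s ≤ 0 := by nlinarith
    exact hψφ s (le_antisymm hv (hv0 s))
  have hmono : (∫ s in τ..tstar, φ s) ≤ ∫ s in τ..tstar, ψ s :=
    intervalIntegral.integral_mono_ae_restrict hτlt.le hφi hψi hae
  have : y τ ≤ z τ := hτS.2
  linarith [hyd, hzd, hmono]

/-- Proposition 3 of the paper: for the extended dynamics
`ẋ = f, ẏ = g, ż = max(g,0)(1-v)` with initial condition `(x₀,y₀,y₀)`, the
infimum of `z(T)` under the state constraint `C : z(t) ≥ y(t)` on `[0,T]`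
equals the infimum of `z(T)` under the mixed constraint
`C_m : max(y-z,0)(1-v) + z - y ≥ 0` a.e. on `[0,T]`. -/
theorem stmt6 (n p : ℕ) (T : ℝ) (hT : 0 < T)
    (U : Set (EuclideanSpace ℝ (Fin p))) (hUne : U.Nonempty) (hUcomp : IsCompact U)
    (f : EuclideanSpace ℝ (Fin n) × ℝ × EuclideanSpace ℝ (Fin p) → EuclideanSpace ℝ (Fin n))
    (g : EuclideanSpace ℝ (Fin n) × ℝ × EuclideanSpace ℝ (Fin p) → ℝ)
    (hf : ContDiff ℝ 1 f) (hg : ContDiff ℝ 1 g)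
    (C : ℝ) (hC : 0 < C)
    (hgrowth : ∀ x y u, u ∈ U → ‖f (x, y, u)‖ + |g (x, y, u)| ≤ C * (1 + ‖x‖ + |y|))
    (x₀ : EuclideanSpace ℝ (Fin n)) (y₀ : ℝ) :
    sInf {r : ℝ |
      ∃ (u : ℝ → EuclideanSpace ℝ (Fin p)) (v : ℝ → ℝ)
        (x : ℝ → EuclideanSpace ℝ (Fin n)) (y z : ℝ → ℝ),
        Measurable u ∧ (∀ t, u t ∈ U) ∧ Measurable v ∧ (∀ t, v t ∈ Icc (0:ℝ) 1) ∧
        Continuous x ∧ Continuous y ∧ Continuous z ∧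
        x 0 = x₀ ∧ y 0 = y₀ ∧ z 0 = y₀ ∧
        (∀ t ∈ Icc 0 T, x t = x₀ + ∫ s in (0:ℝ)..t, f (x s, y s, u s)) ∧
        (∀ t ∈ Icc 0 T, y t = y₀ + ∫ s in (0:ℝ)..t, g (x s, y s, u s)) ∧
        (∀ t ∈ Icc 0 T, z t = y₀ + ∫ s in (0:ℝ)..t, max (g (x s, y s, u s)) 0 * (1 - v s)) ∧
        (∀ t ∈ Icc 0 T, z t ≥ y t) ∧
        r = z T} =
    sInf {r : ℝ |
      ∃ (u : ℝ → EuclideanSpace ℝ (Fin p)) (v : ℝ → ℝ)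
        (x : ℝ → EuclideanSpace ℝ (Fin n)) (y z : ℝ → ℝ),
        Measurable u ∧ (∀ t, u t ∈ U) ∧ Measurable v ∧ (∀ t, v t ∈ Icc (0:ℝ) 1) ∧
        Continuous x ∧ Continuous y ∧ Continuous z ∧
        x 0 = x₀ ∧ y 0 = y₀ ∧ z 0 = y₀ ∧
        (∀ t ∈ Icc 0 T, x t = x₀ + ∫ s in (0:ℝ)..t, f (x s, y s, u s)) ∧
        (∀ t ∈ Icc 0 T, y t = y₀ + ∫ s in (0:ℝ)..t, g (x s, y s, u s)) ∧
        (∀ t ∈ Icc 0 T, z t = y₀ + ∫ s in (0:ℝ)..t, max (g (x s, y s, u s)) 0 * (1 - v s)) ∧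
        (∀ᵐ t ∂(volume.restrict (Icc 0 T)),
          max (y t - z t) 0 * (1 - v t) + z t - y t ≥ 0) ∧
        r = z T} := by
  congr 1
  ext r
  constructor
  · rintro ⟨u, v, x, y, z, hu, huU, hv, hvI, hx, hy, hz, hx0, hy0, hz0,
      hxeq, hyeq, hzeq, hc, hr⟩
    refine ⟨u, v, x, y, z, hu, huU, hv, hvI, hx, hy, hz, hx0, hy0, hz0,
      hxeq, hyeq, hzeq, ?_, hr⟩
    filter_upwards [ae_restrict_mem measurableSet_Icc] with t ht
    have h1 := hc t ht
    have h2 : max (y t - z t) 0 = 0 := max_eq_right (by linarith)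
    rw [h2]
    linarith
  · rintro ⟨u, v, x, y, z, hu, huU, hv, hvI, hx, hy, hz, hx0, hy0, hz0,
      hxeq, hyeq, hzeq, hc, hr⟩
    refine ⟨u, v, x, y, z, hu, huU, hv, hvI, hx, hy, hz, hx0, hy0, hz0,
      hxeq, hyeq, hzeq, ?_, hr⟩
    -- set up the integrands
    set φ : ℝ → ℝ := fun s => g (x s, y s, u s) with hφdef
    set ψ : ℝ → ℝ := fun s => max (g (x s, y s, u s)) 0 * (1 - v s) with hψdef
    haveI : OpensMeasurableSpace
        (EuclideanSpace ℝ (Fin n) × ℝ × EuclideanSpace ℝ (Fin p)) := by infer_instance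
    have hφm : Measurable φ :=
      hg.continuous.measurable.comp (hx.measurable.prodMk (hy.measurable.prodMk hu))
    have hψm : Measurable ψ :=
      (hφm.max measurable_const).mul (measurable_const.sub hv)
    -- bound on the integrand over [0,T]
    set K : Set (EuclideanSpace ℝ (Fin n) × ℝ × EuclideanSpace ℝ (Fin p)) :=
      (x '' Icc 0 T) ×ˢ ((y '' Icc 0 T) ×ˢ U) with hKdef
    have hK : IsCompact K :=
      (isCompact_Icc.image hx).prod ((isCompact_Icc.image hy).prod hUcomp)
    obtain ⟨M, hM⟩ := hK.exists_bound_of_continuousOn hg.continuous.continuousOn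
    have hmemK : ∀ s ∈ Icc (0:ℝ) T, (x s, y s, u s) ∈ K := fun s hs =>
      ⟨mem_image_of_mem x hs, mem_image_of_mem y hs, huU s⟩
    have hM0 : 0 ≤ M := le_trans (norm_nonneg _)
      (hM _ (hmemK 0 ⟨le_refl 0, hT.le⟩))
    have hφbd : ∀ s ∈ Icc (0:ℝ) T, ‖φ s‖ ≤ M := fun s hs => hM _ (hmemK s hs)
    have hψbd : ∀ s ∈ Icc (0:ℝ) T, ‖ψ s‖ ≤ M := by
      intro s hs
      have h1 : |max (g (x s, y s, u s)) 0| ≤ M := by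
        have := hφbd s hs
        rw [Real.norm_eq_abs] at this
        rcases le_or_gt (g (x s, y s, u s)) 0 with h | h
        · rw [max_eq_right h]; simpa using hM0
        · rw [max_eq_left h.le]; exact this
      have h2 : |1 - v s| ≤ 1 := by
        have := hvI s
        rw [abs_le]; constructor <;> [linarith [this.2]; linarith [this.1]]
      calc ‖ψ s‖ = |max (g (x s, y s, u s)) 0| * |1 - v s| := by
            rw [Real.norm_eq_abs, abs_mul]
        _ ≤ M * 1 := mul_le_mul h1 h2 (abs_nonneg _) hM0
        _ = M := mul_one M
    -- interval integrability
    have hint : ∀ (θ : ℝ → ℝ), Measurable θ → (∀ s ∈ Icc (0:ℝ) T, ‖θ s‖ ≤ M) →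
        IntervalIntegrable θ volume 0 T := by
      intro θ hθm hθbd
      rw [intervalIntegrable_iff_integrableOn_Ioc_of_le hT.le]
      refine Integrable.mono' (g := fun _ => M)
        ((integrableOn_const_iff (C := M)).mpr (Or.inr measure_Ioc_lt_top))
        hθm.aestronglyMeasurable ?_
      filter_upwards [ae_restrict_mem measurableSet_Ioc] with s hs
      exact hθbd s (Ioc_subset_Icc_self hs)
    have hφint : IntervalIntegrable φ volume 0 T := hint φ hφm hφbd
    have hψint : IntervalIntegrable ψ volume 0 T := hint ψ hψm hψbd
    -- apply the auxiliary lemma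
    refine aux_state_from_mixed hT φ ψ v y z y₀ hφint hψint
      (fun s => (hvI s).1) ?_ hy hz hy0 hz0 hyeq hzeq hc
    intro s hvs
    simp only [hφdef, hψdef, hvs, sub_zero, mul_one]
    exact le_max_left _ _
end

section
/- Let T > 0, let U ⊆ ℝᵖ be a nonempty compact set, f : ℝⁿ × ℝ × ℝᵖ → ℝⁿ and g : ℝⁿ × ℝ × ℝᵖ → ℝ be continuously differentiable. Let 0 < θ ≤ θ′. Suppose (x,y,z) : [0,T] → ℝⁿ⁺² is an absolutely continuous solution of ẋ = f(x,y,u(t)), ẏ = g(x,y,u(t)), ż = max(g(x,y,u(t)),0)·(1 − v′(t)·e^{−θ′·max(y−z,0)}) for measurable controls u : [0,T] → U and v′ : [0,T] → [0,1]. Then there exists a measurable control v : [0,T] → [0,1], namely v(t) = v′(t)·e^{−(θ′−θ)·max(y(t)−z(t),0)}, such that (x,y,z) is a solution of ẋ = f(x,y,u(t)), ẏ = g(x,y,u(t)), ż = max(g(x,y,u(t)),0)·(1 − v(t)·e^{−θ·max(y−z,0)}) with controls (u,v). -/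
open MeasureTheory Set

/-- solution-set monotonicity `S_{θ′} ⊆ S_θ` for `0 < θ ≤ θ′`, used
in the proof of Proposition 5 of the paper: every absolutely continuous
solution `(x,y,z)` of the θ′-regularized dynamics
`ẋ = f, ẏ = g, ż = max(g,0)(1 - v′·e^{−θ′·max(y−z,0)})` with controls `(u,v′)`
is a solution of the θ-regularized dynamics for the measurable control
`v(t) = v′(t)·e^{−(θ′−θ)·max(y(t)−z(t),0)}`, which takes values in `[0,1]`. -/
theorem stmt8 (n p : ℕ) (T : ℝ) (hT : 0 < T)
    (U : Set (EuclideanSpace ℝ (Fin p))) (hUne : U.Nonempty) (hUcomp : IsCompact U)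
    (f : EuclideanSpace ℝ (Fin n) × ℝ × EuclideanSpace ℝ (Fin p) → EuclideanSpace ℝ (Fin n))
    (g : EuclideanSpace ℝ (Fin n) × ℝ × EuclideanSpace ℝ (Fin p) → ℝ)
    (hf : ContDiff ℝ 1 f) (hg : ContDiff ℝ 1 g)
    (θ θ' : ℝ) (hθ : 0 < θ) (hθθ' : θ ≤ θ')
    (u : ℝ → EuclideanSpace ℝ (Fin p)) (hu : Measurable u) (huU : ∀ t, u t ∈ U)
    (v' : ℝ → ℝ) (hv' : Measurable v') (hv'01 : ∀ t, v' t ∈ Icc (0:ℝ) 1)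
    (x : ℝ → EuclideanSpace ℝ (Fin n)) (y z : ℝ → ℝ)
    (hx : Continuous x) (hy : Continuous y) (hzc : Continuous z)
    (hxeq : ∀ t ∈ Icc 0 T, x t = x 0 + ∫ s in (0:ℝ)..t, f (x s, y s, u s))
    (hyeq : ∀ t ∈ Icc 0 T, y t = y 0 + ∫ s in (0:ℝ)..t, g (x s, y s, u s))
    (hzeq : ∀ t ∈ Icc 0 T, z t = z 0 + ∫ s in (0:ℝ)..t,
      max (g (x s, y s, u s)) 0 *
        (1 - v' s * Real.exp (-θ' * max (y s - z s) 0))) :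
    ∃ v : ℝ → ℝ,
      (∀ t, v t = v' t * Real.exp (-(θ' - θ) * max (y t - z t) 0)) ∧
      Measurable v ∧ (∀ t, v t ∈ Icc (0:ℝ) 1) ∧
      (∀ t ∈ Icc 0 T, x t = x 0 + ∫ s in (0:ℝ)..t, f (x s, y s, u s)) ∧
      (∀ t ∈ Icc 0 T, y t = y 0 + ∫ s in (0:ℝ)..t, g (x s, y s, u s)) ∧
      (∀ t ∈ Icc 0 T, z t = z 0 + ∫ s in (0:ℝ)..t,
        max (g (x s, y s, u s)) 0 *
          (1 - v s * Real.exp (-θ * max (y s - z s) 0))) := by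
  refine ⟨fun t => v' t * Real.exp (-(θ' - θ) * max (y t - z t) 0), fun t => rfl,
    ?_, ?_, hxeq, hyeq, ?_⟩
  · exact hv'.mul ((Real.measurable_exp).comp
      ((measurable_const.mul ((hy.measurable.sub hzc.measurable).max measurable_const))))
  · intro t
    have h0 := (hv'01 t).1
    have h1 := (hv'01 t).2
    have hexp : Real.exp (-(θ' - θ) * max (y t - z t) 0) ≤ 1 := by
      rw [Real.exp_le_one_iff]
      have : 0 ≤ (θ' - θ) * max (y t - z t) 0 :=
        mul_nonneg (by linarith) (le_max_right _ _)
      linarith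
    constructor
    · positivity
    · calc v' t * Real.exp (-(θ' - θ) * max (y t - z t) 0)
          ≤ 1 * 1 := mul_le_mul h1 hexp (Real.exp_pos _).le one_pos.le
        _ = 1 := one_mul 1
  · intro t ht
    rw [hzeq t ht]
    congr 1
    apply intervalIntegral.integral_congr
    intro s _
    have : v' s * Real.exp (-(θ' - θ) * max (y s - z s) 0) *
        Real.exp (-θ * max (y s - z s) 0) =
        v' s * Real.exp (-θ' * max (y s - z s) 0) := by
      rw [mul_assoc, ← Real.exp_add]
      ring_nf
    show _ = (g (x s, y s, u s) ⊔ 0) * (1 - v' s * Real.exp (-(θ' - θ) * ((y s - z s) ⊔ 0)) * Real.exp (-θ * ((y s - z s) ⊔ 0)))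
    rw [this]
end
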